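/- arXiv:1308.1766 — 4 statements merged into one kernel-verified Lean document; each statement's English description precedes it below -/
import Mathlib

section
/- Let S be a p×p Hermitian matrix written in block form S = [[S₁₁, S₁₂],[S₁₂*, S₂₂]], where S₁₁ is q×q and S₂₂ is r×r with q + r = p, and let D = diag(S₁₁, S₂₂) be its block-diagonal part. Let λ_j(·) denote the j-th largest eigenvalue of a Hermitian matrix. If λ_q(S₁₁) > λ_1(S₂₂), then for every j = 1,…,p: |λ_j(S) − λ_j(D)| ≤ ‖S₁₂‖²/(λ_q(S₁₁) − λ_1(S₂₂)), where ‖·‖ denotes the operator (spectral) norm. -/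
open MeasureTheory Filter Matrix
open scoped ENNReal BigOperators Classical

/-- The operator (spectral) norm of a complex matrix. -/
noncomputable def opNorm {m n : ℕ} (M : Matrix (Fin m) (Fin n) ℂ) : ℝ :=
  ‖LinearMap.toContinuousLinearMap (Matrix.toEuclideanLin M)‖

/-- The `j`-th largest eigenvalue of a Hermitian matrix (junk value `0` otherwise). -/
noncomputable def eigDesc {m : ℕ} (M : Matrix (Fin m) (Fin m) ℂ) (j : Fin m) : ℝ :=
  if h : M.IsHermitian then
    (((Multiset.map h.eigenvalues Finset.univ.val).sort (· ≤ ·)).reverse.getD j 0)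
  else 0

section General
variable {n : ℕ}

local notation "E" n => EuclideanSpace ℂ (Fin n)

lemma toEuclideanLin_eq_mulVec' {m : ℕ} (M : Matrix (Fin m) (Fin n) ℂ)
    (v : EuclideanSpace ℂ (Fin n)) :
    Matrix.toEuclideanLin M v = (WithLp.toLp 2 (M *ᵥ v : Fin m → ℂ) : EuclideanSpace ℂ (Fin m)) := rfl

lemma toEuclideanLin_eq_mulVec (M : Matrix (Fin n) (Fin n) ℂ) (v : EuclideanSpace ℂ (Fin n)) :
    Matrix.toEuclideanLin M v = (WithLp.toLp 2 (M *ᵥ v : Fin n → ℂ) : EuclideanSpace ℂ (Fin n)) := rfl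

lemma multiset_sort_ofFn (g : Fin n → ℝ) (hg : Monotone g) :
    (Multiset.map g Finset.univ.val).sort (· ≤ ·) = List.ofFn g := by
  have hcoe : (↑(List.ofFn g) : Multiset ℝ) = Multiset.map g Finset.univ.val := by
    rw [List.ofFn_eq_map]
    simp [Fin.univ_def]
  refine List.Perm.eq_of_pairwise' (Multiset.pairwise_sort _ _) (List.sortedLE_ofFn_iff.mpr hg).pairwise ?_
  rw [← Multiset.coe_eq_coe, Multiset.sort_eq, hcoe]

lemma exists_sorted_eigenbasis {M : Matrix (Fin n) (Fin n) ℂ} (hM : M.IsHermitian) :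
    ∃ b : OrthonormalBasis (Fin n) ℂ (EuclideanSpace ℂ (Fin n)),
      (∀ i, M *ᵥ ⇑(b i) = eigDesc M i • ⇑(b i)) ∧ Antitone (eigDesc M) := by
  classical
  set σ := Tuple.sort hM.eigenvalues with hσ
  set g : Fin n → ℝ := hM.eigenvalues ∘ σ with hgdef
  have hg : Monotone g := Tuple.monotone_sort _
  have huniv : Multiset.map (⇑σ) Finset.univ.val = Finset.univ.val := by
    conv_rhs => rw [← Finset.map_univ_equiv σ]
    rw [Finset.map_val]
    rfl
  have hmap : Multiset.map hM.eigenvalues Finset.univ.val = Multiset.map g Finset.univ.val := by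
    conv_lhs => rw [← huniv]
    rw [Multiset.map_map]
  have heig : ∀ i : Fin n, eigDesc M i = g (Fin.rev i) := by
    intro i
    rw [eigDesc, dif_pos hM, hmap, multiset_sort_ofFn g hg]
    rw [List.getD_eq_getElem _ _ (by simp [i.isLt])]
    rw [List.getElem_reverse, List.getElem_ofFn]
    congr 1
    ext
    simp [Fin.rev]
    omega
  refine ⟨hM.eigenvectorBasis.reindex ((Fin.revPerm.trans σ).symm), fun i => ?_, ?_⟩
  · rw [OrthonormalBasis.coe_reindex]
    simp only [Equiv.symm_symm]
    have := hM.mulVec_eigenvectorBasis (σ (Fin.rev i))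
    rw [heig i]
    simpa [hgdef] using this
  · intro i j hij
    rw [heig i, heig j]
    exact hg (Fin.rev_le_rev.mpr hij)

end General

section MinMax
variable {n : ℕ}

noncomputable def quadForm (M : Matrix (Fin n) (Fin n) ℂ) (x : EuclideanSpace ℂ (Fin n)) : ℝ :=
  (inner (𝕜 := ℂ) x (WithLp.toLp 2 (M *ᵥ x : Fin n → ℂ) : EuclideanSpace ℂ (Fin n))).re

variable (b : OrthonormalBasis (Fin n) ℂ (EuclideanSpace ℂ (Fin n)))
  (M : Matrix (Fin n) (Fin n) ℂ) (μ : Fin n → ℝ)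
  (hb : ∀ i, M *ᵥ ⇑(b i) = μ i • ⇑(b i))

lemma norm_sq_repr (x : EuclideanSpace ℂ (Fin n)) : ‖x‖ ^ 2 = ∑ i, ‖b.repr x i‖ ^ 2 := by
  rw [← b.repr.norm_map x, EuclideanSpace.norm_eq,
    Real.sq_sqrt (Finset.sum_nonneg fun i _ => sq_nonneg _)]

include hb in
lemma quad_repr (x : EuclideanSpace ℂ (Fin n)) :
    quadForm M x = ∑ i, μ i * ‖b.repr x i‖ ^ 2 := by
  have hMx : (WithLp.toLp 2 (M *ᵥ x : Fin n → ℂ) : EuclideanSpace ℂ (Fin n))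
      = ∑ i, ((μ i : ℂ) * b.repr x i) • (b i : EuclideanSpace ℂ (Fin n)) := by
    conv_lhs => rw [← b.sum_repr x]
    rw [← toEuclideanLin_eq_mulVec, map_sum]
    refine Finset.sum_congr rfl fun i _ => ?_
    have h2 : Matrix.toEuclideanLin M (b i) = (μ i : ℂ) • b i := by
      have h1 := hb i
      ext k
      have hk := congrFun h1 k
      simpa [Complex.real_smul] using hk
    rw [LinearMap.map_smul, h2, smul_smul, mul_comm]
  rw [quadForm, hMx, inner_sum]
  rw [Complex.re_sum]
  refine Finset.sum_congr rfl fun i _ => ?_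
  rw [inner_smul_right]
  have h3 : (inner (𝕜 := ℂ) x (b i) : ℂ) = (starRingEnd ℂ) (b.repr x i) := by
    rw [OrthonormalBasis.repr_apply_apply, inner_conj_symm]
  rw [h3, mul_assoc, Complex.mul_conj]
  rw [Complex.normSq_eq_norm_sq]
  rw [← Complex.ofReal_mul, Complex.ofReal_re]

lemma repr_zero_of_mem_span {ι : Type*} (f : ι → Fin n) (x : EuclideanSpace ℂ (Fin n))
    (hx : x ∈ Submodule.span ℂ (Set.range fun k : ι => (b (f k) : EuclideanSpace ℂ (Fin n))))
    (i : Fin n) (hi : ∀ k, f k ≠ i) : b.repr x i = 0 := by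
  have hle : Submodule.span ℂ (Set.range fun k : ι => (b (f k) : EuclideanSpace ℂ (Fin n)))
      ≤ LinearMap.ker ((innerSL ℂ (b i)) : EuclideanSpace ℂ (Fin n) →ₗ[ℂ] ℂ) := by
    rw [Submodule.span_le]
    rintro y ⟨k, rfl⟩
    simp only [SetLike.mem_coe, LinearMap.mem_ker]
    have : (inner (𝕜 := ℂ) (b i) (b (f k)) : ℂ) = 0 :=
      b.orthonormal.2 (fun h => hi k h.symm)
    simpa using this
  have h0 := hle hx
  rw [LinearMap.mem_ker] at h0
  rw [OrthonormalBasis.repr_apply_apply]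
  simpa using h0

lemma exists_ne_zero_mem_inf (V W : Submodule ℂ (EuclideanSpace ℂ (Fin n)))
    (h : n + 1 ≤ Module.finrank ℂ V + Module.finrank ℂ W) :
    ∃ x, x ∈ V ⊓ W ∧ x ≠ 0 := by
  have hsum := Submodule.finrank_sup_add_finrank_inf_eq V W
  have hle : Module.finrank ℂ ↥(V ⊔ W) ≤ n := by
    have h2 := Submodule.finrank_le (V ⊔ W)
    rwa [finrank_euclideanSpace_fin] at h2
  have hpos : 0 < Module.finrank ℂ ↥(V ⊓ W) := by omega
  have hne : V ⊓ W ≠ ⊥ := by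
    intro hbot
    rw [hbot, finrank_bot] at hpos
    exact lt_irrefl 0 hpos
  exact Submodule.exists_mem_ne_zero_of_ne_bot hne

include hb in
lemma quad_le_on_tail (hμ : Antitone μ) (j : Fin n) (x : EuclideanSpace ℂ (Fin n))
    (hx : x ∈ Submodule.span ℂ (Set.range fun k : Fin (n - j) =>
      (b ⟨j + k, by have := k.isLt; have := j.isLt; omega⟩ : EuclideanSpace ℂ (Fin n)))) :
    quadForm M x ≤ μ j * ‖x‖ ^ 2 := by
  rw [quad_repr b M μ hb, norm_sq_repr b, Finset.mul_sum]
  refine Finset.sum_le_sum fun i _ => ?_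
  by_cases hij : (j : ℕ) ≤ (i : ℕ)
  · exact mul_le_mul_of_nonneg_right (hμ (Fin.le_def.mpr hij)) (sq_nonneg _)
  · have h0 : b.repr x i = 0 := by
      refine repr_zero_of_mem_span b _ x hx i fun k => ?_
      intro hk
      apply hij
      have h2 : ((⟨(j : ℕ) + (k : ℕ), by have := k.isLt; have := j.isLt; omega⟩ : Fin n) : ℕ) = (i : ℕ) := congrArg Fin.val hk
      simp only [] at h2
      omega
    rw [h0]
    simp

include hb in
lemma quad_ge_on_head (hμ : Antitone μ) (j : Fin n) (x : EuclideanSpace ℂ (Fin n))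
    (hx : x ∈ Submodule.span ℂ (Set.range fun k : Fin ((j : ℕ) + 1) =>
      (b ⟨k, by have := k.isLt; have := j.isLt; omega⟩ : EuclideanSpace ℂ (Fin n)))) :
    μ j * ‖x‖ ^ 2 ≤ quadForm M x := by
  rw [quad_repr b M μ hb, norm_sq_repr b, Finset.mul_sum]
  refine Finset.sum_le_sum fun i _ => ?_
  by_cases hij : (i : ℕ) ≤ (j : ℕ)
  · exact mul_le_mul_of_nonneg_right (hμ (Fin.le_def.mpr hij)) (sq_nonneg _)
  · have h0 : b.repr x i = 0 := by
      refine repr_zero_of_mem_span b _ x hx i fun k => ?_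
      intro hk
      apply hij
      have h2 : ((⟨(k : ℕ), by have := k.isLt; have := j.isLt; omega⟩ : Fin n) : ℕ) = (i : ℕ) := congrArg Fin.val hk
      simp only [] at h2
      have := k.isLt
      omega
    rw [h0]
    simp

include hb in
lemma le_eig_of_subspace (hμ : Antitone μ) (j : Fin n)
    (V : Submodule ℂ (EuclideanSpace ℂ (Fin n)))
    (hdim : (j : ℕ) + 1 ≤ Module.finrank ℂ V) (c : ℝ)
    (hf : ∀ x ∈ V, c * ‖x‖ ^ 2 ≤ quadForm M x) : c ≤ μ j := by
  set w : Fin (n - j) → EuclideanSpace ℂ (Fin n) :=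
    fun k => b ⟨j + k, by have := k.isLt; have := j.isLt; omega⟩ with hw
  have hli : LinearIndependent ℂ w := by
    refine b.orthonormal.linearIndependent.comp _ fun k l hkl => ?_
    simp only [Fin.mk.injEq] at hkl
    exact Fin.ext (by omega)
  have hfr : Module.finrank ℂ (Submodule.span ℂ (Set.range w)) = n - j := by
    rw [finrank_span_eq_card hli, Fintype.card_fin]
  obtain ⟨x, hx, hx0⟩ := exists_ne_zero_mem_inf V (Submodule.span ℂ (Set.range w))
    (by have := j.isLt; omega)
  have h1 : c * ‖x‖ ^ 2 ≤ quadForm M x := hf x hx.1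
  have h2 : quadForm M x ≤ μ j * ‖x‖ ^ 2 := quad_le_on_tail b M μ hb hμ j x hx.2
  have h3 : 0 < ‖x‖ ^ 2 := pow_pos (norm_pos_iff.mpr hx0) 2
  exact le_of_mul_le_mul_right (h1.trans h2) h3

include hb in
lemma eig_le_of_subspace (hμ : Antitone μ) (j : Fin n)
    (V : Submodule ℂ (EuclideanSpace ℂ (Fin n)))
    (hdim : n - (j : ℕ) ≤ Module.finrank ℂ V) (c : ℝ)
    (hf : ∀ x ∈ V, quadForm M x ≤ c * ‖x‖ ^ 2) : μ j ≤ c := by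
  set w : Fin ((j : ℕ) + 1) → EuclideanSpace ℂ (Fin n) :=
    fun k => b ⟨k, by have := k.isLt; have := j.isLt; omega⟩ with hw
  have hli : LinearIndependent ℂ w := by
    refine b.orthonormal.linearIndependent.comp _ fun k l hkl => ?_
    simp only [Fin.mk.injEq] at hkl
    exact Fin.ext (by omega)
  have hfr : Module.finrank ℂ (Submodule.span ℂ (Set.range w)) = (j : ℕ) + 1 := by
    rw [finrank_span_eq_card hli, Fintype.card_fin]
  obtain ⟨x, hx, hx0⟩ := exists_ne_zero_mem_inf V (Submodule.span ℂ (Set.range w))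
    (by have := j.isLt; omega)
  have h1 : quadForm M x ≤ c * ‖x‖ ^ 2 := hf x hx.1
  have h2 : μ j * ‖x‖ ^ 2 ≤ quadForm M x := quad_ge_on_head b M μ hb hμ j x hx.2
  have h3 : 0 < ‖x‖ ^ 2 := pow_pos (norm_pos_iff.mpr hx0) 2
  exact le_of_mul_le_mul_right (h2.trans h1) h3

lemma finrank_tail_span (j : Fin n) :
    Module.finrank ℂ (Submodule.span ℂ (Set.range fun k : Fin (n - (j : ℕ)) =>
      (b ⟨(j : ℕ) + (k : ℕ), by have := k.isLt; have := j.isLt; omega⟩ :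
        EuclideanSpace ℂ (Fin n)))) = n - (j : ℕ) := by
  have hli : LinearIndependent ℂ (fun k : Fin (n - (j : ℕ)) =>
      (b ⟨(j : ℕ) + (k : ℕ), by have := k.isLt; have := j.isLt; omega⟩ :
        EuclideanSpace ℂ (Fin n))) := by
    refine b.orthonormal.linearIndependent.comp _ fun k l hkl => ?_
    simp only [Fin.mk.injEq] at hkl
    exact Fin.ext (by omega)
  rw [finrank_span_eq_card hli, Fintype.card_fin]

lemma finrank_head_span (j : Fin n) :
    Module.finrank ℂ (Submodule.span ℂ (Set.range fun k : Fin ((j : ℕ) + 1) =>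
      (b ⟨(k : ℕ), by have := k.isLt; have := j.isLt; omega⟩ :
        EuclideanSpace ℂ (Fin n)))) = (j : ℕ) + 1 := by
  have hli : LinearIndependent ℂ (fun k : Fin ((j : ℕ) + 1) =>
      (b ⟨(k : ℕ), by have := k.isLt; have := j.isLt; omega⟩ :
        EuclideanSpace ℂ (Fin n))) := by
    refine b.orthonormal.linearIndependent.comp _ fun k l hkl => ?_
    simp only [Fin.mk.injEq] at hkl
    exact Fin.ext (by omega)
  rw [finrank_span_eq_card hli, Fintype.card_fin]

include hb in
lemma quad_le_max (hμ : Antitone μ) (h0 : 0 < n) (x : EuclideanSpace ℂ (Fin n)) :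
    quadForm M x ≤ μ ⟨0, h0⟩ * ‖x‖ ^ 2 := by
  rw [quad_repr b M μ hb, norm_sq_repr b, Finset.mul_sum]
  exact Finset.sum_le_sum fun i _ =>
    mul_le_mul_of_nonneg_right (hμ (Fin.le_def.mpr (Nat.zero_le _))) (sq_nonneg _)

include hb in
lemma quad_ge_min (hμ : Antitone μ) (h0 : 0 < n) (x : EuclideanSpace ℂ (Fin n)) :
    μ ⟨n - 1, (by omega : n - 1 < n + 0)⟩ * ‖x‖ ^ 2 ≤ quadForm M x := by
  rw [quad_repr b M μ hb, norm_sq_repr b, Finset.mul_sum]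
  refine Finset.sum_le_sum fun i _ => mul_le_mul_of_nonneg_right
    (hμ (Fin.le_def.mpr ?_)) (sq_nonneg _)
  have := i.isLt
  simp only []
  omega

end MinMax

lemma key_ineq {ε δ η s t : ℝ} (hε : 0 ≤ ε) (hδ : 0 < δ) (hη : η = ε ^ 2 / δ)
    (hs : 0 ≤ s) (ht : 0 ≤ t) : 2 * ε * s * t ≤ η * s ^ 2 + (δ + η) * t ^ 2 := by
  have hηδ : η * δ = ε ^ 2 := by rw [hη]; field_simp
  have hηnn : 0 ≤ η := by rw [hη]; positivity
  nlinarith [sq_nonneg (ε * s - δ * t), sq_nonneg (ε * t), hδ.le, mul_pos hδ hδ]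

section Blocks
variable {q r : ℕ}

noncomputable def glue (x : EuclideanSpace ℂ (Fin q)) (y : EuclideanSpace ℂ (Fin r)) :
    EuclideanSpace ℂ (Fin (q + r)) :=
  WithLp.toLp 2 (fun k => Sum.elim x y (finSumFinEquiv.symm k))

noncomputable def emb1 : EuclideanSpace ℂ (Fin q) →ₗ[ℂ] EuclideanSpace ℂ (Fin (q + r)) where
  toFun x := glue x 0
  map_add' x y := by
    ext k
    rcases h : finSumFinEquiv.symm k with a | a <;> simp [glue, h]
  map_smul' c x := by
    ext k
    rcases h : finSumFinEquiv.symm k with a | a <;> simp [glue, h]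

noncomputable def emb2 : EuclideanSpace ℂ (Fin r) →ₗ[ℂ] EuclideanSpace ℂ (Fin (q + r)) where
  toFun y := glue 0 y
  map_add' x y := by
    ext k
    rcases h : finSumFinEquiv.symm k with a | a <;> simp [glue, h]
  map_smul' c x := by
    ext k
    rcases h : finSumFinEquiv.symm k with a | a <;> simp [glue, h]

lemma glue_eq_add (x : EuclideanSpace ℂ (Fin q)) (y : EuclideanSpace ℂ (Fin r)) :
    glue x y = emb1 x + emb2 y := by
  ext k
  rcases h : finSumFinEquiv.symm k with a | a <;> simp [glue, emb1, emb2, h]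

lemma inner_glue (x x' : EuclideanSpace ℂ (Fin q)) (y y' : EuclideanSpace ℂ (Fin r)) :
    (inner (𝕜 := ℂ) (glue x y) (glue x' y') : ℂ)
      = inner (𝕜 := ℂ) x x' + inner (𝕜 := ℂ) y y' := by
  simp only [PiLp.inner_apply, glue]
  rw [Equiv.sum_comp finSumFinEquiv.symm
    (fun s => (inner (𝕜 := ℂ) (Sum.elim x y s) (Sum.elim x' y' s) : ℂ))]
  rw [Fintype.sum_sum_type]
  simp

lemma norm_glue_sq (x : EuclideanSpace ℂ (Fin q)) (y : EuclideanSpace ℂ (Fin r)) :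
    ‖glue x y‖ ^ 2 = ‖x‖ ^ 2 + ‖y‖ ^ 2 := by
  have h1 := inner_glue x x y y
  have h2 : RCLike.re (inner (𝕜 := ℂ) (glue x y) (glue x y)) = ‖glue x y‖ ^ 2 :=
    inner_self_eq_norm_sq _
  have h3 : RCLike.re (inner (𝕜 := ℂ) x x) = ‖x‖ ^ 2 := inner_self_eq_norm_sq _
  have h4 : RCLike.re (inner (𝕜 := ℂ) y y) = ‖y‖ ^ 2 := inner_self_eq_norm_sq _
  rw [RCLike.re_to_complex] at h2 h3 h4
  rw [← h2, h1, Complex.add_re, h3, h4]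

lemma mulVec_glue (M11 : Matrix (Fin q) (Fin q) ℂ) (M12 : Matrix (Fin q) (Fin r) ℂ)
    (M21 : Matrix (Fin r) (Fin q) ℂ) (M22 : Matrix (Fin r) (Fin r) ℂ)
    (x : EuclideanSpace ℂ (Fin q)) (y : EuclideanSpace ℂ (Fin r)) :
    ((Matrix.reindex finSumFinEquiv finSumFinEquiv (Matrix.fromBlocks M11 M12 M21 M22))
        *ᵥ glue x y : Fin (q + r) → ℂ)
      = glue ((WithLp.toLp 2 (M11 *ᵥ x) : EuclideanSpace ℂ (Fin q)) + (WithLp.toLp 2 (M12 *ᵥ y) : EuclideanSpace ℂ (Fin q)))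
          ((WithLp.toLp 2 (M21 *ᵥ x) : EuclideanSpace ℂ (Fin r)) + (WithLp.toLp 2 (M22 *ᵥ y) : EuclideanSpace ℂ (Fin r))) := by
  rw [Matrix.reindex_apply, Matrix.submatrix_mulVec_equiv]
  have hcomp : (glue x y : Fin (q + r) → ℂ) ∘ (finSumFinEquiv.symm.symm : _ → Fin (q + r))
      = Sum.elim x y := by
    funext s
    simp [glue]
  rw [hcomp, Matrix.fromBlocks_mulVec]
  funext k
  simp [glue, Function.comp]

end Blocks

section Blocks2
variable {q r : ℕ}

lemma re_inner_conjTranspose (B : Matrix (Fin q) (Fin r) ℂ) (x : EuclideanSpace ℂ (Fin q))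
    (y : EuclideanSpace ℂ (Fin r)) :
    (inner (𝕜 := ℂ) y (WithLp.toLp 2 (Bᴴ *ᵥ x : Fin r → ℂ) : EuclideanSpace ℂ (Fin r))).re
      = (inner (𝕜 := ℂ) x (WithLp.toLp 2 (B *ᵥ y : Fin q → ℂ) : EuclideanSpace ℂ (Fin q))).re := by
  have h1 : (WithLp.toLp 2 (Bᴴ *ᵥ x : Fin r → ℂ) : EuclideanSpace ℂ (Fin r))
      = LinearMap.adjoint (Matrix.toEuclideanLin B) x := by
    rw [← Matrix.toEuclideanLin_conjTranspose_eq_adjoint]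
    exact (toEuclideanLin_eq_mulVec' Bᴴ x).symm
  rw [h1, LinearMap.adjoint_inner_right]
  have h2 : (inner (𝕜 := ℂ) ((Matrix.toEuclideanLin B) y) x : ℂ)
      = (starRingEnd ℂ) (inner (𝕜 := ℂ) x ((Matrix.toEuclideanLin B) y)) :=
    (inner_conj_symm _ _).symm
  rw [h2, Complex.conj_re, toEuclideanLin_eq_mulVec' B y]

lemma abs_re_inner_mulVec_le (B : Matrix (Fin q) (Fin r) ℂ) (x : EuclideanSpace ℂ (Fin q))
    (y : EuclideanSpace ℂ (Fin r)) :
    |(inner (𝕜 := ℂ) x (WithLp.toLp 2 (B *ᵥ y : Fin q → ℂ) : EuclideanSpace ℂ (Fin q))).re|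
      ≤ opNorm B * ‖x‖ * ‖y‖ := by
  set w : EuclideanSpace ℂ (Fin q) := Matrix.toEuclideanLin B y with hw
  have h1 : ‖w‖ ≤ opNorm B * ‖y‖ := by
    have h := (LinearMap.toContinuousLinearMap (Matrix.toEuclideanLin B)).le_opNorm y
    simpa [opNorm] using h
  have h3 : (inner (𝕜 := ℂ) x (WithLp.toLp 2 (B *ᵥ y : Fin q → ℂ) : EuclideanSpace ℂ (Fin q)) : ℂ)
      = inner (𝕜 := ℂ) x w := rfl
  rw [h3]
  calc |(inner (𝕜 := ℂ) x w : ℂ).re| ≤ ‖(inner (𝕜 := ℂ) x w : ℂ)‖ := by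
        exact Complex.abs_re_le_norm _
    _ ≤ ‖x‖ * ‖w‖ := norm_inner_le_norm _ _
    _ ≤ ‖x‖ * (opNorm B * ‖y‖) := mul_le_mul_of_nonneg_left h1 (norm_nonneg x)
    _ = opNorm B * ‖x‖ * ‖y‖ := by ring

lemma quad_glue (A : Matrix (Fin q) (Fin q) ℂ) (B : Matrix (Fin q) (Fin r) ℂ)
    (C : Matrix (Fin r) (Fin r) ℂ) (x : EuclideanSpace ℂ (Fin q))
    (y : EuclideanSpace ℂ (Fin r)) :
    quadForm (Matrix.reindex finSumFinEquiv finSumFinEquiv (Matrix.fromBlocks A B Bᴴ C))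
        (glue x y)
      = quadForm A x + 2 * (inner (𝕜 := ℂ) x (WithLp.toLp 2 (B *ᵥ y : Fin q → ℂ) :
          EuclideanSpace ℂ (Fin q))).re + quadForm C y := by
  rw [quadForm, mulVec_glue, inner_glue, inner_add_right, inner_add_right, quadForm, quadForm]
  simp only [Complex.add_re]
  rw [re_inner_conjTranspose B x y]
  ring

lemma isHermitian_blocks (A : Matrix (Fin q) (Fin q) ℂ) (B : Matrix (Fin q) (Fin r) ℂ)
    (C : Matrix (Fin r) (Fin r) ℂ) (hA : A.IsHermitian) (hC : C.IsHermitian) :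
    (Matrix.reindex finSumFinEquiv finSumFinEquiv
      (Matrix.fromBlocks A B Bᴴ C)).IsHermitian := by
  have h : (Matrix.fromBlocks A B Bᴴ C).IsHermitian :=
    Matrix.isHermitian_fromBlocks_iff.mpr ⟨hA, rfl, Matrix.conjTranspose_conjTranspose B, hC⟩
  rw [Matrix.reindex_apply]
  exact h.submatrix _

end Blocks2

section GlueSub
variable {q r : ℕ}

lemma emb1_injective : Function.Injective (emb1 (q := q) (r := r)) := by
  intro a b hab
  ext i
  have := congrFun (congrArg (fun (z : EuclideanSpace ℂ (Fin (q + r))) (k : Fin (q + r)) => z k)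
    hab) (finSumFinEquiv (Sum.inl i))
  simpa [emb1, glue] using this

lemma emb2_injective : Function.Injective (emb2 (q := q) (r := r)) := by
  intro a b hab
  ext i
  have := congrFun (congrArg (fun (z : EuclideanSpace ℂ (Fin (q + r))) (k : Fin (q + r)) => z k)
    hab) (finSumFinEquiv (Sum.inr i))
  simpa [emb2, glue] using this

lemma mem_glue_sup {P : Submodule ℂ (EuclideanSpace ℂ (Fin q))}
    {Q : Submodule ℂ (EuclideanSpace ℂ (Fin r))} {x : EuclideanSpace ℂ (Fin (q + r))}
    (hx : x ∈ (Submodule.map emb1 P) ⊔ (Submodule.map emb2 Q)) :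
    ∃ x₁ ∈ P, ∃ x₂ ∈ Q, x = glue x₁ x₂ := by
  rw [Submodule.mem_sup] at hx
  obtain ⟨a, ha, b, hb, rfl⟩ := hx
  obtain ⟨x₁, hx₁, rfl⟩ := ha
  obtain ⟨x₂, hx₂, rfl⟩ := hb
  exact ⟨x₁, hx₁, x₂, hx₂, (glue_eq_add x₁ x₂).symm⟩

lemma finrank_glue_sup (P : Submodule ℂ (EuclideanSpace ℂ (Fin q)))
    (Q : Submodule ℂ (EuclideanSpace ℂ (Fin r))) :
    Module.finrank ℂ ((Submodule.map emb1 P) ⊔ (Submodule.map emb2 Q) :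
        Submodule ℂ (EuclideanSpace ℂ (Fin (q + r))))
      = Module.finrank ℂ P + Module.finrank ℂ Q := by
  have hinf : (Submodule.map emb1 P) ⊓ (Submodule.map emb2 Q) = ⊥ := by
    rw [Submodule.eq_bot_iff]
    rintro z ⟨hz1, hz2⟩
    obtain ⟨x₁, -, hx₁⟩ := hz1
    obtain ⟨x₂, -, hx₂⟩ := hz2
    ext k
    rcases h : finSumFinEquiv.symm k with a | a
    · have := congrFun (congrArg (fun (z : EuclideanSpace ℂ (Fin (q + r)))
        (k : Fin (q + r)) => z k) hx₂) k
      simpa [emb2, glue, h] using this.symm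
    · have := congrFun (congrArg (fun (z : EuclideanSpace ℂ (Fin (q + r)))
        (k : Fin (q + r)) => z k) hx₁) k
      simpa [emb1, glue, h] using this.symm
  have h1 : Module.finrank ℂ (Submodule.map (emb1 (q := q) (r := r)) P)
      = Module.finrank ℂ P :=
    (Submodule.equivMapOfInjective (emb1 (q := q) (r := r)) emb1_injective P).symm.finrank_eq
  have h2 : Module.finrank ℂ (Submodule.map (emb2 (q := q) (r := r)) Q)
      = Module.finrank ℂ Q :=
    (Submodule.equivMapOfInjective (emb2 (q := q) (r := r)) emb2_injective Q).symm.finrank_eq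
  have := Submodule.finrank_sup_add_finrank_inf_eq (Submodule.map emb1 P)
    (Submodule.map emb2 Q)
  rw [hinf, finrank_bot] at this
  omega

end GlueSub

section Key
variable {q r : ℕ}

lemma zero_vec_lemma (B : Matrix (Fin q) (Fin r) ℂ) :
    (WithLp.toLp 2 (B *ᵥ (0 : EuclideanSpace ℂ (Fin r)) : Fin q → ℂ) : EuclideanSpace ℂ (Fin q)) = 0 := by
  ext k
  simp [Matrix.mulVec_zero]

lemma quadForm_zero (C : Matrix (Fin r) (Fin r) ℂ) :
    quadForm C (0 : EuclideanSpace ℂ (Fin r)) = 0 := by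
  simp [quadForm]

lemma eig_block_lower₁ (hq : 0 < q) (hr : 0 < r)
    (A : Matrix (Fin q) (Fin q) ℂ) (B : Matrix (Fin q) (Fin r) ℂ)
    (C : Matrix (Fin r) (Fin r) ℂ) (hA : A.IsHermitian) (hC : C.IsHermitian)
    (j : Fin (q + r)) (hj : (j : ℕ) < q) :
    eigDesc A ⟨j, hj⟩ ≤ eigDesc (Matrix.reindex finSumFinEquiv finSumFinEquiv
      (Matrix.fromBlocks A B Bᴴ C)) j := by
  obtain ⟨bS, hbS, hμS⟩ := exists_sorted_eigenbasis (isHermitian_blocks A B C hA hC)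
  obtain ⟨b₁, hb₁, hμ₁⟩ := exists_sorted_eigenbasis hA
  set jq : Fin q := ⟨j, hj⟩ with hjq
  set P := Submodule.span ℂ (Set.range fun k : Fin ((jq : ℕ) + 1) =>
    (b₁ ⟨(k : ℕ), by have := k.isLt; have := jq.isLt; omega⟩ :
      EuclideanSpace ℂ (Fin q))) with hP
  refine le_eig_of_subspace bS _ _ hbS hμS j
    ((Submodule.map emb1 P) ⊔ (Submodule.map emb2 (⊥ : Submodule ℂ _))) ?_ _ ?_
  · rw [finrank_glue_sup, finrank_bot, hP, finrank_head_span]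
  · intro x hx
    obtain ⟨x₁, hx₁, x₂, hx₂, rfl⟩ := mem_glue_sup hx
    rw [(Submodule.mem_bot ℂ).mp hx₂]
    rw [quad_glue, norm_glue_sq, zero_vec_lemma, inner_zero_right, quadForm_zero,
      norm_zero]
    have h1 := quad_ge_on_head b₁ A (eigDesc A) hb₁ hμ₁ jq x₁ hx₁
    simpa using h1

lemma eig_block_upper₁ (hq : 0 < q) (hr : 0 < r)
    (A : Matrix (Fin q) (Fin q) ℂ) (B : Matrix (Fin q) (Fin r) ℂ)
    (C : Matrix (Fin r) (Fin r) ℂ) (hA : A.IsHermitian) (hC : C.IsHermitian)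
    (ε : ℝ) (hε : 0 ≤ ε)
    (hcross : ∀ (x : EuclideanSpace ℂ (Fin q)) (y : EuclideanSpace ℂ (Fin r)),
      |(inner (𝕜 := ℂ) x (WithLp.toLp 2 (B *ᵥ y : Fin q → ℂ) : EuclideanSpace ℂ (Fin q))).re|
        ≤ ε * ‖x‖ * ‖y‖)
    (hgap : eigDesc C ⟨0, hr⟩ < eigDesc A ⟨q - 1, (by omega : q - 1 < q + 0)⟩)
    (j : Fin (q + r)) (hj : (j : ℕ) < q) :
    eigDesc (Matrix.reindex finSumFinEquiv finSumFinEquiv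
        (Matrix.fromBlocks A B Bᴴ C)) j
      ≤ eigDesc A ⟨j, hj⟩ + ε ^ 2 / (eigDesc A ⟨q - 1, (by omega : q - 1 < q + 0)⟩ - eigDesc C ⟨0, hr⟩) := by
  obtain ⟨bS, hbS, hμS⟩ := exists_sorted_eigenbasis (isHermitian_blocks A B C hA hC)
  obtain ⟨b₁, hb₁, hμ₁⟩ := exists_sorted_eigenbasis hA
  obtain ⟨b₂, hb₂, hμ₂⟩ := exists_sorted_eigenbasis hC
  set α := eigDesc A ⟨q - 1, (by omega : q - 1 < q + 0)⟩ with hα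
  set β := eigDesc C ⟨0, hr⟩ with hβ
  set δ := α - β with hδdef
  have hδ : 0 < δ := by rw [hδdef]; linarith
  set η := ε ^ 2 / δ with hη
  have hηnn : 0 ≤ η := by rw [hη]; positivity
  set jq : Fin q := ⟨j, hj⟩ with hjq
  set a := eigDesc A jq with ha
  have hαa : α ≤ a := by
    rw [ha, hα]
    refine hμ₁ (Fin.le_def.mpr ?_)
    have h5 : (jq : ℕ) = (j : ℕ) := rfl
    have h6 : ((⟨q - 1, by omega⟩ : Fin q) : ℕ) = q - 1 := rfl
    omega
  set P := Submodule.span ℂ (Set.range fun k : Fin (q - (jq : ℕ)) =>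
    (b₁ ⟨(jq : ℕ) + (k : ℕ), by have := k.isLt; have := jq.isLt; omega⟩ :
      EuclideanSpace ℂ (Fin q))) with hP
  refine eig_le_of_subspace bS _ _ hbS hμS j
    ((Submodule.map emb1 P) ⊔ (Submodule.map emb2 (⊤ : Submodule ℂ _))) ?_ _ ?_
  · rw [finrank_glue_sup, hP, finrank_tail_span, finrank_top, finrank_euclideanSpace_fin]
    have h5 : (jq : ℕ) = (j : ℕ) := rfl
    omega
  · intro x hx
    obtain ⟨x₁, hx₁, x₂, -, rfl⟩ := mem_glue_sup hx
    rw [quad_glue, norm_glue_sq]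
    have h1 : quadForm A x₁ ≤ a * ‖x₁‖ ^ 2 := quad_le_on_tail b₁ A (eigDesc A) hb₁ hμ₁ jq x₁ hx₁
    have h2 : quadForm C x₂ ≤ β * ‖x₂‖ ^ 2 := quad_le_max b₂ C (eigDesc C) hb₂ hμ₂ hr x₂
    have h3 := (abs_le.mp (hcross x₁ x₂)).2
    have hkey : 2 * ε * ‖x₁‖ * ‖x₂‖ ≤ η * ‖x₁‖ ^ 2 + (δ + η) * ‖x₂‖ ^ 2 :=
      key_ineq hε hδ hη (norm_nonneg x₁) (norm_nonneg x₂)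
    have h4 : α * ‖x₂‖ ^ 2 ≤ a * ‖x₂‖ ^ 2 := mul_le_mul_of_nonneg_right hαa (sq_nonneg _)
    have hδeq : β + δ = α := by rw [hδdef]; ring
    nlinarith [h1, h2, h3, hkey, h4]

lemma eig_block_upper₂ (hq : 0 < q) (hr : 0 < r)
    (A : Matrix (Fin q) (Fin q) ℂ) (B : Matrix (Fin q) (Fin r) ℂ)
    (C : Matrix (Fin r) (Fin r) ℂ) (hA : A.IsHermitian) (hC : C.IsHermitian)
    (j : Fin (q + r)) (hj : q ≤ (j : ℕ)) :
    eigDesc (Matrix.reindex finSumFinEquiv finSumFinEquiv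
        (Matrix.fromBlocks A B Bᴴ C)) j
      ≤ eigDesc C ⟨(j : ℕ) - q, by have := j.isLt; omega⟩ := by
  obtain ⟨bS, hbS, hμS⟩ := exists_sorted_eigenbasis (isHermitian_blocks A B C hA hC)
  obtain ⟨b₂, hb₂, hμ₂⟩ := exists_sorted_eigenbasis hC
  set ir : Fin r := ⟨(j : ℕ) - q, by have := j.isLt; omega⟩ with hir
  set Q := Submodule.span ℂ (Set.range fun k : Fin (r - (ir : ℕ)) =>
    (b₂ ⟨(ir : ℕ) + (k : ℕ), by have := k.isLt; have := ir.isLt; omega⟩ :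
      EuclideanSpace ℂ (Fin r))) with hQ
  refine eig_le_of_subspace bS _ _ hbS hμS j
    ((Submodule.map emb1 (⊥ : Submodule ℂ _)) ⊔ (Submodule.map emb2 Q)) ?_ _ ?_
  · rw [finrank_glue_sup, finrank_bot, hQ, finrank_tail_span]
    have h5 : (ir : ℕ) = (j : ℕ) - q := rfl
    have := j.isLt
    omega
  · intro x hx
    obtain ⟨x₁, hx₁, x₂, hx₂, rfl⟩ := mem_glue_sup hx
    rw [(Submodule.mem_bot ℂ).mp hx₁]
    rw [quad_glue, norm_glue_sq]
    have h1 := quad_le_on_tail b₂ C (eigDesc C) hb₂ hμ₂ ir x₂ hx₂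
    have h0 : (WithLp.toLp 2 (B *ᵥ x₂ : Fin q → ℂ) : EuclideanSpace ℂ (Fin q)) =
        (WithLp.toLp 2 (B *ᵥ x₂ : Fin q → ℂ) : EuclideanSpace ℂ (Fin q)) := rfl
    rw [inner_zero_left, quadForm_zero, norm_zero]
    simpa using h1

lemma eig_block_lower₂ (hq : 0 < q) (hr : 0 < r)
    (A : Matrix (Fin q) (Fin q) ℂ) (B : Matrix (Fin q) (Fin r) ℂ)
    (C : Matrix (Fin r) (Fin r) ℂ) (hA : A.IsHermitian) (hC : C.IsHermitian)
    (ε : ℝ) (hε : 0 ≤ ε)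
    (hcross : ∀ (x : EuclideanSpace ℂ (Fin q)) (y : EuclideanSpace ℂ (Fin r)),
      |(inner (𝕜 := ℂ) x (WithLp.toLp 2 (B *ᵥ y : Fin q → ℂ) : EuclideanSpace ℂ (Fin q))).re|
        ≤ ε * ‖x‖ * ‖y‖)
    (hgap : eigDesc C ⟨0, hr⟩ < eigDesc A ⟨q - 1, (by omega : q - 1 < q + 0)⟩)
    (j : Fin (q + r)) (hj : q ≤ (j : ℕ)) :
    eigDesc C ⟨(j : ℕ) - q, by have := j.isLt; omega⟩
        - ε ^ 2 / (eigDesc A ⟨q - 1, (by omega : q - 1 < q + 0)⟩ - eigDesc C ⟨0, hr⟩)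
      ≤ eigDesc (Matrix.reindex finSumFinEquiv finSumFinEquiv
        (Matrix.fromBlocks A B Bᴴ C)) j := by
  obtain ⟨bS, hbS, hμS⟩ := exists_sorted_eigenbasis (isHermitian_blocks A B C hA hC)
  obtain ⟨b₁, hb₁, hμ₁⟩ := exists_sorted_eigenbasis hA
  obtain ⟨b₂, hb₂, hμ₂⟩ := exists_sorted_eigenbasis hC
  set α := eigDesc A ⟨q - 1, (by omega : q - 1 < q + 0)⟩ with hα
  set β := eigDesc C ⟨0, hr⟩ with hβ
  set δ := α - β with hδdef
  have hδ : 0 < δ := by rw [hδdef]; linarith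
  set η := ε ^ 2 / δ with hη
  have hηnn : 0 ≤ η := by rw [hη]; positivity
  set ir : Fin r := ⟨(j : ℕ) - q, by have := j.isLt; omega⟩ with hir
  set bi := eigDesc C ir with hbi
  have hbiβ : bi ≤ β := by
    rw [hbi, hβ]
    refine hμ₂ (Fin.le_def.mpr ?_)
    have h5 : (ir : ℕ) = (j : ℕ) - q := rfl
    have h6 : ((⟨0, hr⟩ : Fin r) : ℕ) = 0 := rfl
    omega
  set Q := Submodule.span ℂ (Set.range fun k : Fin ((ir : ℕ) + 1) =>
    (b₂ ⟨(k : ℕ), by have := k.isLt; have := ir.isLt; omega⟩ :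
      EuclideanSpace ℂ (Fin r))) with hQ
  refine le_eig_of_subspace bS _ _ hbS hμS j
    ((Submodule.map emb1 (⊤ : Submodule ℂ _)) ⊔ (Submodule.map emb2 Q)) ?_ _ ?_
  · rw [finrank_glue_sup, hQ, finrank_head_span, finrank_top, finrank_euclideanSpace_fin]
    have h5 : (ir : ℕ) = (j : ℕ) - q := rfl
    omega
  · intro x hx
    obtain ⟨x₁, -, x₂, hx₂, rfl⟩ := mem_glue_sup hx
    rw [quad_glue, norm_glue_sq]
    have h1 : α * ‖x₁‖ ^ 2 ≤ quadForm A x₁ := by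
      have := quad_ge_min b₁ A (eigDesc A) hb₁ hμ₁ hq x₁
      simpa [← hα] using this
    have h2 : bi * ‖x₂‖ ^ 2 ≤ quadForm C x₂ := quad_ge_on_head b₂ C (eigDesc C) hb₂ hμ₂ ir x₂ hx₂
    have h3 := (abs_le.mp (hcross x₁ x₂)).1
    have hkey : 2 * ε * ‖x₂‖ * ‖x₁‖ ≤ η * ‖x₂‖ ^ 2 + (δ + η) * ‖x₁‖ ^ 2 :=
      key_ineq hε hδ hη (norm_nonneg x₂) (norm_nonneg x₁)
    have h4 : bi * ‖x₁‖ ^ 2 ≤ β * ‖x₁‖ ^ 2 := mul_le_mul_of_nonneg_right hbiβ (sq_nonneg _)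
    have hδeq : β + δ = α := by rw [hδdef]; ring
    nlinarith [h1, h2, h3, hkey, h4]

end Key


/-- **Wielandt-type bound for the eigenvalues of a 2×2-block Hermitian matrix versus its
block-diagonal part.** If `λ_q(S₁₁) > λ_1(S₂₂)` then for every `j`,
`|λ_j(S) − λ_j(D)| ≤ ‖S₁₂‖² / (λ_q(S₁₁) − λ_1(S₂₂))`. -/
theorem wielandt_block_diagonal_eigenvalue_bound {q r : ℕ} (hq : 0 < q) (hr : 0 < r)
    (S₁₁ : Matrix (Fin q) (Fin q) ℂ) (S₁₂ : Matrix (Fin q) (Fin r) ℂ)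
    (S₂₂ : Matrix (Fin r) (Fin r) ℂ)
    (h11 : S₁₁.IsHermitian) (h22 : S₂₂.IsHermitian)
    (hgap : eigDesc S₂₂ ⟨0, hr⟩ < eigDesc S₁₁ ⟨q - 1, by omega⟩) :
    ∀ j : Fin (q + r),
      |eigDesc ((Matrix.reindex finSumFinEquiv finSumFinEquiv)
            (Matrix.fromBlocks S₁₁ S₁₂ S₁₂ᴴ S₂₂)) j
        - eigDesc ((Matrix.reindex finSumFinEquiv finSumFinEquiv)
            (Matrix.fromBlocks S₁₁ 0 0 S₂₂)) j|
      ≤ opNorm S₁₂ ^ 2 / (eigDesc S₁₁ ⟨q - 1, by omega⟩ - eigDesc S₂₂ ⟨0, hr⟩) := by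
  intro j
  have hε : 0 ≤ opNorm S₁₂ := norm_nonneg _
  have hδ : 0 < eigDesc S₁₁ ⟨q - 1, by omega⟩ - eigDesc S₂₂ ⟨0, hr⟩ := by linarith
  have hηnn : 0 ≤ opNorm S₁₂ ^ 2 / (eigDesc S₁₁ ⟨q - 1, by omega⟩ - eigDesc S₂₂ ⟨0, hr⟩) :=
    by positivity
  have hcrossB := abs_re_inner_mulVec_le S₁₂
  have hcross0 : ∀ (x : EuclideanSpace ℂ (Fin q)) (y : EuclideanSpace ℂ (Fin r)),
      |(inner (𝕜 := ℂ) x (WithLp.toLp 2 ((0 : Matrix (Fin q) (Fin r) ℂ) *ᵥ y : Fin q → ℂ) :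
        EuclideanSpace ℂ (Fin q))).re| ≤ 0 * ‖x‖ * ‖y‖ := by
    intro x y
    have h0 : (WithLp.toLp 2 ((0 : Matrix (Fin q) (Fin r) ℂ) *ᵥ y : Fin q → ℂ) :
        EuclideanSpace ℂ (Fin q)) = 0 := by
      ext k
      simp [Matrix.zero_mulVec]
    rw [h0, inner_zero_right]
    simp
  have h00 : (0 : ℝ) ^ 2 / (eigDesc S₁₁ ⟨q - 1, by omega⟩ - eigDesc S₂₂ ⟨0, hr⟩) = 0 := by
    simp
  have hDze : ((0 : Matrix (Fin q) (Fin r) ℂ))ᴴ = 0 := Matrix.conjTranspose_zero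
  by_cases hj : (j : ℕ) < q
  · have hSl := eig_block_lower₁ hq hr S₁₁ S₁₂ S₂₂ h11 h22 j hj
    have hSu := eig_block_upper₁ hq hr S₁₁ S₁₂ S₂₂ h11 h22 (opNorm S₁₂) hε hcrossB hgap j hj
    have hDl := eig_block_lower₁ hq hr S₁₁ 0 S₂₂ h11 h22 j hj
    have hDu := eig_block_upper₁ hq hr S₁₁ 0 S₂₂ h11 h22 0 le_rfl hcross0 hgap j hj
    rw [hDze] at hDl hDu
    rw [h00] at hDu
    rw [abs_le]
    constructor <;> linarith
  · push_neg at hj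
    have hSu := eig_block_upper₂ hq hr S₁₁ S₁₂ S₂₂ h11 h22 j hj
    have hSl := eig_block_lower₂ hq hr S₁₁ S₁₂ S₂₂ h11 h22 (opNorm S₁₂) hε hcrossB hgap j hj
    have hDu := eig_block_upper₂ hq hr S₁₁ 0 S₂₂ h11 h22 j hj
    have hDl := eig_block_lower₂ hq hr S₁₁ 0 S₂₂ h11 h22 0 le_rfl hcross0 hgap j hj
    rw [hDze] at hDl hDu
    rw [h00] at hDl
    rw [abs_le]
    constructor <;> linarith
end

section
/- Let D₁ be a p×p Hermitian matrix, z ∈ ℂ⁺ with v = Im z, and H any p×p complex matrix. Let u, w, a ∈ ℂ^p and t ≥ 0 be real, and set D₂ = D₁ + u u* − w w* + t·a a* (also Hermitian). Then |tr((D₂ − zI)^{-1}H) − tr((D₁ − zI)^{-1}H)| ≤ 3‖H‖/v, where ‖H‖ denotes the operator norm. -/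
open MeasureTheory Filter Matrix
open scoped ENNReal BigOperators Classical

variable {p : ℕ}

noncomputable def nq (v : Fin p → ℂ) : ℝ := ∑ i, Complex.normSq (v i)

lemma nq_nonneg (v : Fin p → ℂ) : 0 ≤ nq v :=
  Finset.sum_nonneg fun i _ => Complex.normSq_nonneg _

lemma dot_self_eq (v : Fin p → ℂ) : star v ⬝ᵥ v = (nq v : ℂ) := by
  simp [dotProduct, nq, Complex.normSq_eq_conj_mul_self]

lemma nq_pos {v : Fin p → ℂ} (hv : v ≠ 0) : 0 < nq v := by
  rcases (nq_nonneg v).lt_or_eq with h | h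
  · exact h
  · exfalso; apply hv
    have := (Finset.sum_eq_zero_iff_of_nonneg (fun i _ => Complex.normSq_nonneg (v i))).1 h.symm
    funext i
    simpa [Complex.normSq_eq_zero] using this i (Finset.mem_univ i)

lemma herm_quad_im (A : Matrix (Fin p) (Fin p) ℂ) (hA : A.IsHermitian) (y : Fin p → ℂ) :
    (star y ⬝ᵥ A *ᵥ y).im = 0 := by
  have h : star (star y ⬝ᵥ A *ᵥ y) = star y ⬝ᵥ A *ᵥ y := by
    nth_rewrite 1 [star_dotProduct]
    rw [star_star, star_mulVec, hA.eq, dotProduct_mulVec]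
  have := congrArg Complex.im h
  simp only [Complex.star_def, Complex.conj_im] at this
  linarith

lemma herm_unit (A : Matrix (Fin p) (Fin p) ℂ) (hA : A.IsHermitian) {z : ℂ}
    (hz : z.im ≠ 0) : IsUnit (A - z • 1).det := by
  rw [isUnit_iff_ne_zero]
  intro hdet
  obtain ⟨y, hy0, hy⟩ := (Matrix.exists_mulVec_eq_zero_iff).2 hdet
  have hAy : A *ᵥ y = z • y := by
    have := hy
    rw [sub_mulVec, sub_eq_zero] at this
    simpa [smul_mulVec] using this
  have h1 : star y ⬝ᵥ A *ᵥ y = z * (nq y : ℂ) := by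
    rw [hAy, dotProduct_smul, dot_self_eq]; simp [smul_eq_mul]
  have h2 := herm_quad_im A hA y
  rw [h1] at h2
  simp only [Complex.mul_im, Complex.ofReal_re, Complex.ofReal_im, mul_zero, add_zero, zero_add] at h2
  have := nq_pos hy0
  rcases mul_eq_zero.1 h2 with h | h
  · exact hz h
  · linarith

lemma vecMulVec_mulVec (u v y : Fin p → ℂ) :
    vecMulVec u v *ᵥ y = (v ⬝ᵥ y) • u := by
  funext i
  simp [mulVec, dotProduct, vecMulVec_apply, Finset.mul_sum, mul_comm, mul_left_comm]

lemma mul_vecMulVec (M : Matrix (Fin p) (Fin p) ℂ) (u v : Fin p → ℂ) :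
    M * vecMulVec u v = vecMulVec (M *ᵥ u) v := by
  ext i j
  simp only [Matrix.mul_apply, vecMulVec_apply, mulVec, dotProduct, Finset.mul_sum]
  rw [Finset.sum_mul]
  exact Finset.sum_congr rfl fun x _ => by ring

lemma vecMulVec_smul_left (c : ℂ) (u v : Fin p → ℂ) :
    vecMulVec (c • u) v = c • vecMulVec u v := by
  ext i j
  simp [vecMulVec_apply, mul_assoc]

lemma trace_vecMulVec_mul (u v : Fin p → ℂ) (M : Matrix (Fin p) (Fin p) ℂ) :
    (vecMulVec u v * M).trace = v ⬝ᵥ M *ᵥ u := by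
  simp only [Matrix.trace, Matrix.diag, Matrix.mul_apply, vecMulVec_apply, dotProduct, mulVec]
  rw [Finset.sum_comm]
  exact Finset.sum_congr rfl fun j _ => by
    simp [Finset.mul_sum, mul_comm, mul_left_comm]

lemma dot_opNorm_bound (H : Matrix (Fin p) (Fin p) ℂ) (a b : Fin p → ℂ) :
    ‖star a ⬝ᵥ H *ᵥ b‖
      ≤ opNorm H * (Real.sqrt (nq a) * Real.sqrt (nq b)) := by
  set a' : EuclideanSpace ℂ (Fin p) := (WithLp.equiv 2 _).symm a
  set b' : EuclideanSpace ℂ (Fin p) := (WithLp.equiv 2 _).symm b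
  have hin : (inner ℂ a' ((LinearMap.toContinuousLinearMap (Matrix.toEuclideanLin H)) b') : ℂ)
      = star a ⬝ᵥ H *ᵥ b := by
    simp only [LinearMap.coe_toContinuousLinearMap', b',
      Matrix.toEuclideanLin_toLp, Matrix.toLin'_apply]
    simp [PiLp.inner_apply, dotProduct, mulVec, a', RCLike.inner_apply, mul_comm]
  have hna : ‖a'‖ = Real.sqrt (nq a) := by
    rw [EuclideanSpace.norm_eq]
    congr 1
    exact Finset.sum_congr rfl fun i _ => by
      rw [show ‖a' i‖ = ‖a i‖ from rfl, Complex.sq_norm]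
  have hnb : ‖b'‖ = Real.sqrt (nq b) := by
    rw [EuclideanSpace.norm_eq]
    congr 1
    exact Finset.sum_congr rfl fun i _ => by
      rw [show ‖b' i‖ = ‖b i‖ from rfl, Complex.sq_norm]
  calc ‖star a ⬝ᵥ H *ᵥ b‖
      = ‖(inner ℂ a' ((LinearMap.toContinuousLinearMap (Matrix.toEuclideanLin H)) b') : ℂ)‖ := by
        rw [hin]
    _ ≤ ‖a'‖ * ‖(LinearMap.toContinuousLinearMap (Matrix.toEuclideanLin H)) b'‖ :=
        norm_inner_le_norm _ _
    _ ≤ ‖a'‖ * (opNorm H * ‖b'‖) := by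
        refine mul_le_mul_of_nonneg_left ?_ (norm_nonneg _)
        exact ContinuousLinearMap.le_opNorm _ _
    _ = opNorm H * (Real.sqrt (nq a) * Real.sqrt (nq b)) := by
        rw [hna, hnb]; ring

lemma herm_add_vecMulVec (A : Matrix (Fin p) (Fin p) ℂ) (hA : A.IsHermitian) (c : ℝ)
    (x : Fin p → ℂ) : (A + (c : ℂ) • vecMulVec x (star x)).IsHermitian := by
  have h1 : (vecMulVec x (star x)).IsHermitian := by
    ext i j
    simp [Matrix.conjTranspose_apply, vecMulVec_apply, mul_comm]
  unfold Matrix.IsHermitian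
  rw [conjTranspose_add, hA.eq, conjTranspose_smul, h1.eq]
  congr 1
  simp [Complex.star_def, Complex.conj_ofReal]

lemma M_conjTranspose (A : Matrix (Fin p) (Fin p) ℂ) (hA : A.IsHermitian) (z : ℂ) :
    (A - z • 1)ᴴ = A - (starRingEnd ℂ z) • (1 : Matrix (Fin p) (Fin p) ℂ) := by
  rw [conjTranspose_sub, hA.eq, conjTranspose_smul]
  simp

lemma M_comm (A : Matrix (Fin p) (Fin p) ℂ) (hA : A.IsHermitian) (z : ℂ) :
    (A - z • 1)ᴴ * (A - z • 1) = (A - z • 1) * (A - z • 1)ᴴ := by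
  rw [M_conjTranspose A hA z]
  simp only [Matrix.sub_mul, Matrix.mul_sub, Matrix.smul_mul, Matrix.mul_smul,
    Matrix.one_mul, Matrix.mul_one, smul_smul, smul_sub]
  rw [mul_comm ((starRingEnd ℂ) z) z]
  abel

lemma nq_resolvent_adj (A : Matrix (Fin p) (Fin p) ℂ) (hA : A.IsHermitian) (z : ℂ)
    (x : Fin p → ℂ) :
    nq ((A - z • 1)⁻¹ᴴ *ᵥ x) = nq ((A - z • 1)⁻¹ *ᵥ x) := by
  set M := A - z • 1 with hM
  have hc0 : Mᴴ * M = M * Mᴴ := M_comm A hA z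
  have hcomm : M⁻¹ * M⁻¹ᴴ = M⁻¹ᴴ * M⁻¹ := by
    rw [Matrix.conjTranspose_nonsing_inv, ← Matrix.mul_inv_rev, ← Matrix.mul_inv_rev, hc0]
  have h1 : ((nq (M⁻¹ᴴ *ᵥ x) : ℝ) : ℂ) = ((nq (M⁻¹ *ᵥ x) : ℝ) : ℂ) := by
    rw [← dot_self_eq, ← dot_self_eq]
    rw [star_mulVec, star_mulVec, Matrix.conjTranspose_conjTranspose,
      ← dotProduct_mulVec, ← dotProduct_mulVec, mulVec_mulVec, mulVec_mulVec, hcomm]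
  exact_mod_cast h1

lemma rank_one_step (A : Matrix (Fin p) (Fin p) ℂ) (hA : A.IsHermitian)
    (H : Matrix (Fin p) (Fin p) ℂ) {z : ℂ} (hz : 0 < z.im) (c : ℝ) (x : Fin p → ℂ) :
    ‖((A + (c : ℂ) • vecMulVec x (star x) - z • 1)⁻¹ * H).trace
      - ((A - z • 1)⁻¹ * H).trace‖ ≤ opNorm H / z.im := by
  have hznz : z.im ≠ 0 := ne_of_gt hz
  have hbound0 : (0 : ℝ) ≤ opNorm H / z.im := div_nonneg (norm_nonneg _) hz.le
  by_cases hc : c = 0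
  · subst hc; simp [hbound0]
  by_cases hx : x = 0
  · subst hx
    have h0 : vecMulVec (0 : Fin p → ℂ) (0 : Fin p → ℂ) = 0 := by
      ext i j; simp [vecMulVec_apply]
    simp [h0, hbound0]
  set B := A + (c : ℂ) • vecMulVec x (star x) with hB
  have hBH : B.IsHermitian := herm_add_vecMulVec A hA c x
  set M₁ := A - z • 1 with hM₁
  set M₂ := B - z • 1 with hM₂
  have hu1 : IsUnit M₁.det := herm_unit A hA hznz
  have hu2 : IsUnit M₂.det := herm_unit B hBH hznz
  set y := M₁⁻¹ *ᵥ x with hy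
  have hxy : M₁ *ᵥ y = x := by
    rw [hy, mulVec_mulVec, Matrix.mul_nonsing_inv _ hu1, one_mulVec]
  have hynz : y ≠ 0 := by
    intro h; apply hx; rw [← hxy, h, mulVec_zero]
  have hnqy : 0 < nq y := nq_pos hynz
  set s := star x ⬝ᵥ y with hs
  have his : s = star y ⬝ᵥ A *ᵥ y - (starRingEnd ℂ) z * (nq y : ℂ) := by
    rw [hs, ← hxy, star_mulVec, ← dotProduct_mulVec, M_conjTranspose A hA z,
      sub_mulVec, dotProduct_sub, smul_mulVec, one_mulVec, dotProduct_smul,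
      dot_self_eq, smul_eq_mul]
  have hsim : s.im = z.im * nq y := by
    rw [his, Complex.sub_im, herm_quad_im A hA y, Complex.mul_im]
    simp [Complex.conj_im, Complex.conj_re]
  set d : ℂ := 1 + (c : ℂ) * s with hd
  have hdim : d.im = c * (z.im * nq y) := by
    rw [hd, Complex.add_im, Complex.mul_im, hsim]
    simp
  have hdnz : d ≠ 0 := by
    intro h
    rw [h] at hdim
    simp only [Complex.zero_im] at hdim
    have h1 : c * (z.im * nq y) ≠ 0 :=
      mul_ne_zero hc (mul_ne_zero hznz (ne_of_gt hnqy))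
    exact h1 hdim.symm
  have hM21 : M₂ = M₁ + (c : ℂ) • vecMulVec x (star x) := by
    rw [hM₂, hM₁, hB]; abel
  have hM2y : M₂ *ᵥ y = d • x := by
    rw [hM21, add_mulVec, hxy, smul_mulVec, vecMulVec_mulVec, ← hs, hd,
      add_smul, one_smul, smul_smul]
  have hM2x : M₂⁻¹ *ᵥ x = d⁻¹ • y := by
    have h1 : M₂⁻¹ *ᵥ (M₂ *ᵥ y) = M₂⁻¹ *ᵥ (d • x) := by rw [hM2y]
    rw [mulVec_mulVec, Matrix.nonsing_inv_mul _ hu2, one_mulVec, mulVec_smul] at h1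
    rw [eq_comm, inv_smul_eq_iff₀ hdnz]
    exact h1
  have hres : M₂⁻¹ - M₁⁻¹ = M₂⁻¹ * (M₁ - M₂) * M₁⁻¹ := by
    rw [Matrix.mul_sub, Matrix.sub_mul, Matrix.mul_assoc,
      Matrix.mul_nonsing_inv _ hu1, Matrix.mul_one, Matrix.nonsing_inv_mul _ hu2,
      Matrix.one_mul]
  have hM12 : M₁ - M₂ = -((c : ℂ) • vecMulVec x (star x)) := by
    rw [hM21]; abel
  have hdiff : M₂⁻¹ - M₁⁻¹ = (-(c : ℂ) * d⁻¹) • (vecMulVec y (star x) * M₁⁻¹) := by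
    rw [hres, hM12]
    rw [Matrix.mul_neg, Matrix.neg_mul, Matrix.mul_smul, Matrix.smul_mul,
      _root_.mul_vecMulVec, hM2x, vecMulVec_smul_left]
    rw [Matrix.smul_mul, smul_smul, ← neg_smul, neg_mul]
  set g := M₁⁻¹ᴴ *ᵥ x with hg
  have hstarg : star g = star x ᵥ* M₁⁻¹ := by
    rw [hg, star_mulVec, Matrix.conjTranspose_conjTranspose]
  have hT : (M₂⁻¹ * H).trace - (M₁⁻¹ * H).trace
      = (-(c : ℂ) * d⁻¹) * (star g ⬝ᵥ H *ᵥ y) := by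
    rw [← Matrix.trace_sub, ← Matrix.sub_mul, hdiff, Matrix.smul_mul, Matrix.trace_smul,
      smul_eq_mul, Matrix.mul_assoc, trace_vecMulVec_mul]
    congr 1
    rw [← mulVec_mulVec, dotProduct_mulVec, ← hstarg]
  have hnqg : nq g = nq y := nq_resolvent_adj A hA z x
  have hCS := dot_opNorm_bound H g y
  have habsT : ‖(M₂⁻¹ * H).trace - (M₁⁻¹ * H).trace‖
      = |c| / ‖d‖ * ‖star g ⬝ᵥ H *ᵥ y‖ := by
    rw [hT, norm_mul, norm_mul,
      show (-(c : ℂ)) = ((-c : ℝ) : ℂ) by push_cast; ring,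
      Complex.norm_real, Real.norm_eq_abs, abs_neg, norm_inv, div_eq_mul_inv]
  have hcabs : (0:ℝ) < |c| := abs_pos.2 hc
  have hd_lb : |c| * (z.im * nq y) ≤ ‖d‖ := by
    have h1 : |d.im| = |c| * (z.im * nq y) := by
      rw [hdim, abs_mul, abs_of_pos (mul_pos hz hnqy)]
    rw [← h1]
    exact Complex.abs_im_le_norm d
  have hd_pos : (0:ℝ) < ‖d‖ := lt_of_lt_of_le
    (mul_pos hcabs (mul_pos hz hnqy)) hd_lb
  calc ‖(M₂⁻¹ * H).trace - (M₁⁻¹ * H).trace‖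
      = |c| / ‖d‖ * ‖star g ⬝ᵥ H *ᵥ y‖ := habsT
    _ ≤ |c| / ‖d‖ * (opNorm H * (Real.sqrt (nq g) * Real.sqrt (nq y))) := by
        exact mul_le_mul_of_nonneg_left hCS (div_nonneg hcabs.le hd_pos.le)
    _ = |c| * (opNorm H * nq y) / ‖d‖ := by
        rw [hnqg, Real.mul_self_sqrt hnqy.le]; ring
    _ ≤ |c| * (opNorm H * nq y) / (|c| * (z.im * nq y)) := by
        have hX : (0:ℝ) ≤ |c| * (opNorm H * nq y) :=
          mul_nonneg hcabs.le (mul_nonneg (norm_nonneg _) hnqy.le)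
        exact div_le_div_of_nonneg_left hX (mul_pos hcabs (mul_pos hz hnqy)) hd_lb
    _ = opNorm H / z.im := by
        rw [mul_div_mul_left _ _ (ne_of_gt hcabs), mul_comm (opNorm H) (nq y),
          mul_comm z.im (nq y), mul_div_mul_left _ _ (ne_of_gt hnqy)]

/-- **Rank-three Hermitian perturbation resolvent bound.**
If `D₂ = D₁ + u u* − w w* + t a a*` with `t ≥ 0` and `D₁` Hermitian, then for `z ∈ ℂ⁺`
with `v = Im z`, `|tr((D₂ − zI)⁻¹ H) − tr((D₁ − zI)⁻¹ H)| ≤ 3‖H‖/v`. -/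
theorem rank_three_resolvent_trace_bound {p : ℕ}
    (D₁ : Matrix (Fin p) (Fin p) ℂ) (hD₁ : D₁.IsHermitian)
    (H : Matrix (Fin p) (Fin p) ℂ)
    (z : ℂ) (hz : 0 < z.im)
    (u w a : Fin p → ℂ) (t : ℝ) (ht : 0 ≤ t)
    (D₂ : Matrix (Fin p) (Fin p) ℂ)
    (hD₂ : D₂ = D₁ + Matrix.vecMulVec u (star u) - Matrix.vecMulVec w (star w)
      + (t : ℂ) • Matrix.vecMulVec a (star a)) :
    ‖((D₂ - z • 1)⁻¹ * H).trace - ((D₁ - z • 1)⁻¹ * H).trace‖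
      ≤ 3 * opNorm H / z.im := by
  set A₁ := D₁ + vecMulVec u (star u) with hA₁def
  have hA₁ : A₁.IsHermitian := by
    have := herm_add_vecMulVec D₁ hD₁ 1 u
    simpa using this
  set A₂ := A₁ - vecMulVec w (star w) with hA₂def
  have hA₂ : A₂.IsHermitian := by
    have := herm_add_vecMulVec A₁ hA₁ (-1) w
    simpa [Complex.ofReal_neg, Complex.ofReal_one, neg_one_smul, ← sub_eq_add_neg]
      using this
  have hD₂' : D₂ = A₂ + (t : ℂ) • vecMulVec a (star a) := by
    rw [hD₂, hA₂def, hA₁def]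
  have h1 : ‖((A₁ - z • 1)⁻¹ * H).trace - ((D₁ - z • 1)⁻¹ * H).trace‖
      ≤ opNorm H / z.im := by
    have := rank_one_step D₁ hD₁ H hz 1 u
    simpa using this
  have h2 : ‖((A₂ - z • 1)⁻¹ * H).trace - ((A₁ - z • 1)⁻¹ * H).trace‖
      ≤ opNorm H / z.im := by
    have := rank_one_step A₁ hA₁ H hz (-1) w
    simpa [Complex.ofReal_neg, Complex.ofReal_one, neg_one_smul, ← sub_eq_add_neg]
      using this
  have h3 : ‖((D₂ - z • 1)⁻¹ * H).trace - ((A₂ - z • 1)⁻¹ * H).trace‖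
      ≤ opNorm H / z.im := by
    rw [hD₂']
    exact rank_one_step A₂ hA₂ H hz t a
  have tri : ‖((D₂ - z • 1)⁻¹ * H).trace - ((D₁ - z • 1)⁻¹ * H).trace‖
      ≤ ‖((D₂ - z • 1)⁻¹ * H).trace - ((A₂ - z • 1)⁻¹ * H).trace‖
        + ‖((A₂ - z • 1)⁻¹ * H).trace - ((A₁ - z • 1)⁻¹ * H).trace‖
        + ‖((A₁ - z • 1)⁻¹ * H).trace - ((D₁ - z • 1)⁻¹ * H).trace‖ := by
    have := norm_sub_le_norm_sub_add_norm_sub (((D₂ - z • 1)⁻¹ * H).trace)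
      (((A₂ - z • 1)⁻¹ * H).trace) (((D₁ - z • 1)⁻¹ * H).trace)
    have h4 := norm_sub_le_norm_sub_add_norm_sub (((A₂ - z • 1)⁻¹ * H).trace)
      (((A₁ - z • 1)⁻¹ * H).trace) (((D₁ - z • 1)⁻¹ * H).trace)
    linarith
  have : 3 * opNorm H / z.im = opNorm H / z.im + opNorm H / z.im + opNorm H / z.im := by
    ring
  rw [this]
  linarith
end

section
/- Let z ∈ ℂ⁺ with v = Im z, let Λ = diag(λ₁,…,λ_p) with λ_k ≥ 0, let b̄_n ≥ 0, and let V be a p×n complex matrix whose k-th row is v_k^*. Define Y(z) = √(n/p)(VV^* − b̄_nΛ) − zI; for each k, let V_(k) be V with its k-th row replaced by zeros, Λ_(k) = Λ − λ_k e_k e_kᵀ, Y_(k)(z) = √(n/p)(V_(k)V_(k)^* − b̄_nΛ_(k)) − zI, ω_k = √(n/p)·V_(k)v_k, and τ_kk = √(n/p)(v_k^*v_k − b̄_nλ_k). Then for each k, Im(z − τ_kk + ω_k^*Y_(k)^{-1}(z)ω_k) ≥ v > 0, and the following identities hold: (1/p)tr(Y(z)^{-1}) = −(1/p)Σ_{k=1}^p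 1/(z − τ_kk + ω_k^*Y_(k)^{-1}(z)ω_k) and (1/p)tr(Y(z)^{-1}Λ) = −(1/p)Σ_{k=1}^p λ_k/(z − τ_kk + ω_k^*Y_(k)^{-1}(z)ω_k). -/
open MeasureTheory Filter Matrix
open scoped ENNReal BigOperators Classical ComplexOrder

section

variable {p n : ℕ}

/-- `Y(z) = √(n/p)(V V* − b̄ₙ Λ) − z I`. -/
noncomputable def Ymat (V : Matrix (Fin p) (Fin n) ℂ) (lam : Fin p → ℝ) (bn : ℝ) (z : ℂ) :
    Matrix (Fin p) (Fin p) ℂ :=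
  (Real.sqrt ((n : ℝ) / p) : ℂ) • (V * Vᴴ - (bn : ℂ) • Matrix.diagonal (fun i => (lam i : ℂ)))
    - z • 1

/-- `Y₍ₖ₎(z) = √(n/p)(V₍ₖ₎ V₍ₖ₎* − b̄ₙ Λ₍ₖ₎) − z I`, where `V₍ₖ₎` is `V` with its `k`-th row
replaced by zeros and `Λ₍ₖ₎ = Λ − λₖ eₖ eₖᵀ`. -/
noncomputable def Ykmat (V : Matrix (Fin p) (Fin n) ℂ) (lam : Fin p → ℝ) (bn : ℝ) (z : ℂ)
    (k : Fin p) : Matrix (Fin p) (Fin p) ℂ :=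
  (Real.sqrt ((n : ℝ) / p) : ℂ) •
      ((Matrix.updateRow V k 0) * (Matrix.updateRow V k 0)ᴴ
        - (bn : ℂ) • Matrix.diagonal (fun i => if i = k then 0 else (lam i : ℂ)))
    - z • 1

/-- `ωₖ = √(n/p) V₍ₖ₎ vₖ`, where `vₖ*` is the `k`-th row of `V`. -/
noncomputable def omegak (V : Matrix (Fin p) (Fin n) ℂ) (k : Fin p) : Fin p → ℂ :=
  (Real.sqrt ((n : ℝ) / p) : ℂ) • ((Matrix.updateRow V k 0) *ᵥ star (V k))

/-- `τₖₖ = √(n/p)(vₖ* vₖ − b̄ₙ λₖ)`. -/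
noncomputable def tauk (V : Matrix (Fin p) (Fin n) ℂ) (lam : Fin p → ℝ) (bn : ℝ)
    (k : Fin p) : ℂ :=
  (Real.sqrt ((n : ℝ) / p) : ℂ) * ((V k ⬝ᵥ star (V k)) - (bn : ℂ) * (lam k : ℂ))

/-- The quadratic form `ωₖ* Y₍ₖ₎(z)⁻¹ ωₖ`. -/
noncomputable def quadk (V : Matrix (Fin p) (Fin n) ℂ) (lam : Fin p → ℝ) (bn : ℝ) (z : ℂ)
    (k : Fin p) : ℂ :=
  star (omegak V k) ⬝ᵥ ((Ykmat V lam bn z k)⁻¹ *ᵥ omegak V k)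

end


section helperlemmas
variable {q : ℕ}

lemma im_star_dot_self (v : Fin q → ℂ) : (star v ⬝ᵥ v).im = 0 := by
  simp only [dotProduct, Pi.star_apply, Complex.im_sum, Complex.mul_im, Complex.star_def,
    Complex.conj_re, Complex.conj_im]
  apply Finset.sum_eq_zero; intro i _; ring

lemma re_star_dot_self (v : Fin q → ℂ) : 0 ≤ (star v ⬝ᵥ v).re := by
  simp only [dotProduct, Pi.star_apply, Complex.re_sum]
  exact Finset.sum_nonneg fun i _ => by
    simpa [Complex.mul_re] using add_nonneg (mul_self_nonneg _) (mul_self_nonneg _)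

lemma star_dot_self_eq_zero {v : Fin q → ℂ} (h : (star v ⬝ᵥ v) = 0) : v = 0 :=
  dotProduct_star_self_eq_zero.mp h

lemma im_herm_quad {H : Matrix (Fin q) (Fin q) ℂ} (hH : H.IsHermitian) (v : Fin q → ℂ) :
    (star v ⬝ᵥ (H *ᵥ v)).im = 0 := by
  have h2 : star (H *ᵥ v) ⬝ᵥ v = star v ⬝ᵥ (H *ᵥ v) := by
    rw [star_mulVec, ← dotProduct_mulVec, hH.eq]
  have h : star (star v ⬝ᵥ (H *ᵥ v)) = star v ⬝ᵥ (H *ᵥ v) :=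
    (star_dotProduct (H *ᵥ v) v).symm.trans h2
  have := congrArg Complex.im h
  simp only [Complex.star_def, Complex.conj_im] at this
  linarith

lemma herm_sub_smul_one_det {H : Matrix (Fin q) (Fin q) ℂ} (hH : H.IsHermitian)
    {z : ℂ} (hz : z.im ≠ 0) : IsUnit (H - z • 1).det := by
  rw [isUnit_iff_ne_zero]
  intro hdet
  obtain ⟨v, hv, hmv⟩ := (Matrix.exists_mulVec_eq_zero_iff).mpr hdet
  have hHv : H *ᵥ v = z • v := by
    have := hmv
    rw [sub_mulVec, smul_mulVec, one_mulVec, sub_eq_zero] at this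
    exact this
  have h1 : (star v ⬝ᵥ (H *ᵥ v)).im = 0 := im_herm_quad hH v
  rw [hHv, dotProduct_smul, smul_eq_mul, Complex.mul_im, im_star_dot_self,
    mul_zero, zero_add] at h1
  have : (star v ⬝ᵥ v).re = 0 := by
    rcases mul_eq_zero.mp h1 with h | h
    · exact absurd h hz
    · exact h
  apply hv
  apply star_dot_self_eq_zero
  exact Complex.ext this (im_star_dot_self v)

lemma quad_im_nonneg {H : Matrix (Fin q) (Fin q) ℂ} (hH : H.IsHermitian) {z : ℂ}
    (hz : 0 < z.im) (w : Fin q → ℂ) :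
    0 ≤ (star w ⬝ᵥ ((H - z • 1)⁻¹ *ᵥ w)).im := by
  have hdet := herm_sub_smul_one_det hH (ne_of_gt hz)
  set y : Fin q → ℂ := (H - z • 1)⁻¹ *ᵥ w with hy
  have hw : w = (H - z • 1) *ᵥ y := by
    rw [hy, mulVec_mulVec, Matrix.mul_nonsing_inv _ hdet, one_mulVec]
  have hc : star w ⬝ᵥ y = star y ⬝ᵥ (H *ᵥ y) - (starRingEnd ℂ) z * (star y ⬝ᵥ y) := by
    rw [hw, star_mulVec, ← dotProduct_mulVec]
    rw [conjTranspose_sub, hH.eq, conjTranspose_smul, conjTranspose_one]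
    rw [sub_mulVec, dotProduct_sub]
    congr 1
    rw [smul_mulVec, one_mulVec, dotProduct_smul, smul_eq_mul]
    rfl
  rw [hc, Complex.sub_im, im_herm_quad hH, zero_sub, Complex.mul_im]
  simp only [Complex.conj_re, Complex.conj_im, im_star_dot_self, mul_zero, add_zero]
  have := re_star_dot_self y
  nlinarith

lemma smul_isHermitian {r : ℂ} {A : Matrix (Fin q) (Fin q) ℂ} (hr : star r = r)
    (hA : A.IsHermitian) : (r • A).IsHermitian := by
  unfold Matrix.IsHermitian at *
  rw [conjTranspose_smul, hr, hA]

lemma diag_entry {q n : ℕ} {z : ℂ} (hz : 0 < z.im)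
    (lam : Fin q → ℝ) (bn : ℝ) (V : Matrix (Fin q) (Fin n) ℂ) (k : Fin q) :
    z.im ≤ (z - tauk V lam bn k + quadk V lam bn z k).im ∧
    (Ymat V lam bn z)⁻¹ k k = -(z - tauk V lam bn k + quadk V lam bn z k)⁻¹ := by
  have hz0 : z ≠ 0 := fun h => by simp [h] at hz
  set c : ℂ := ((Real.sqrt ((n : ℝ) / q) : ℝ) : ℂ) with hcdef
  have hcstar : star c = c := by rw [hcdef, Complex.star_def, Complex.conj_ofReal]
  set W : Matrix (Fin q) (Fin n) ℂ := Matrix.updateRow V k 0 with hWdef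
  have hWk : W k = 0 := Matrix.updateRow_self
  have hWne : ∀ i, i ≠ k → W i = V i := fun i hi => Matrix.updateRow_ne hi
  -- Hermitian parts
  have hdiag1 : (Matrix.diagonal (fun i => (lam i : ℂ))).IsHermitian := by
    apply Matrix.isHermitian_diagonal_of_self_adjoint
    funext i
    simp [Complex.star_def, Complex.conj_ofReal]
  have hdiag2 : (Matrix.diagonal (fun i => if i = k then 0 else (lam i : ℂ))).IsHermitian := by
    apply Matrix.isHermitian_diagonal_of_self_adjoint
    funext i
    by_cases h : i = k <;> simp [h, Complex.star_def, Complex.conj_ofReal]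
  have hbnstar : star ((bn : ℝ) : ℂ) = ((bn : ℝ) : ℂ) := by
    rw [Complex.star_def, Complex.conj_ofReal]
  have hHY : (c • (V * Vᴴ - (bn : ℂ) • Matrix.diagonal (fun i => (lam i : ℂ)))).IsHermitian :=
    smul_isHermitian hcstar ((Matrix.isHermitian_mul_conjTranspose_self V).sub
      (smul_isHermitian hbnstar hdiag1))
  have hHK : (c • (W * Wᴴ - (bn : ℂ) • Matrix.diagonal
      (fun i => if i = k then 0 else (lam i : ℂ)))).IsHermitian :=
    smul_isHermitian hcstar ((Matrix.isHermitian_mul_conjTranspose_self W).sub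
      (smul_isHermitian hbnstar hdiag2))
  have hYeq : Ymat V lam bn z
      = (c • (V * Vᴴ - (bn : ℂ) • Matrix.diagonal (fun i => (lam i : ℂ)))) - z • 1 := rfl
  have hKeq : Ykmat V lam bn z k
      = (c • (W * Wᴴ - (bn : ℂ) • Matrix.diagonal
          (fun i => if i = k then 0 else (lam i : ℂ)))) - z • 1 := rfl
  have hdetY : IsUnit (Ymat V lam bn z).det := by
    rw [hYeq]; exact herm_sub_smul_one_det hHY (ne_of_gt hz)
  have hdetK : IsUnit (Ykmat V lam bn z k).det := by
    rw [hKeq]; exact herm_sub_smul_one_det hHK (ne_of_gt hz)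
  -- quad imaginary part
  have hquadim : 0 ≤ (quadk V lam bn z k).im := by
    have : quadk V lam bn z k
        = star (omegak V k) ⬝ᵥ (((c • (W * Wᴴ - (bn : ℂ) • Matrix.diagonal
            (fun i => if i = k then 0 else (lam i : ℂ)))) - z • 1)⁻¹ *ᵥ omegak V k) := by
      rw [← hKeq]; rfl
    rw [this]
    exact quad_im_nonneg hHK hz (omegak V k)
  -- tau imaginary part
  have htauim : (tauk V lam bn k).im = 0 := by
    have h1 : (V k ⬝ᵥ star (V k)).im = 0 := by
      have := im_star_dot_self (star (V k))
      rwa [star_star] at this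
    rw [tauk, Complex.mul_im]
    rw [← hcdef]  -- align c
    simp [hcdef, Complex.sub_im, h1, ← Complex.ofReal_mul]
  -- the denominator
  set d : ℂ := z - tauk V lam bn k + quadk V lam bn z k with hd
  have him : z.im ≤ d.im := by
    rw [hd, Complex.add_im, Complex.sub_im, htauim]
    linarith
  have hd0 : d ≠ 0 := by
    intro h
    rw [h] at him
    simp at him
    linarith
  refine ⟨him, ?_⟩
  -- omegak at k
  have hωk : omegak V k k = 0 := by
    simp [omegak, Matrix.mulVec, ← hWdef, hWk, dotProduct]
  -- the vector m
  set m : Fin q → ℂ := (Ykmat V lam bn z k)⁻¹ *ᵥ omegak V k with hm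
  have hquaddef : quadk V lam bn z k = star (omegak V k) ⬝ᵥ m := by rw [hm]; rfl
  have hrec : Ykmat V lam bn z k *ᵥ m = omegak V k := by
    rw [hm, mulVec_mulVec, Matrix.mul_nonsing_inv _ hdetK, one_mulVec]
  -- entry formulas
  have hYapply : ∀ i j, Ymat V lam bn z i j
      = c * ((V i ⬝ᵥ star (V j)) - (bn : ℂ) * (if i = j then (lam i : ℂ) else 0))
        - z * (if i = j then 1 else 0) := by
    intro i j
    rw [Ymat, ← hcdef]
    simp only [Matrix.sub_apply, Matrix.smul_apply, Matrix.mul_apply,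
      Matrix.conjTranspose_apply, Matrix.diagonal_apply, Matrix.one_apply, dotProduct,
      Pi.star_apply, smul_eq_mul]
  have hKapply : ∀ i j, Ykmat V lam bn z k i j
      = c * ((W i ⬝ᵥ star (W j))
          - (bn : ℂ) * (if i = j then (if i = k then 0 else (lam i : ℂ)) else 0))
        - z * (if i = j then 1 else 0) := by
    intro i j
    rw [Ykmat, ← hcdef, ← hWdef]
    simp only [Matrix.sub_apply, Matrix.smul_apply, Matrix.mul_apply,
      Matrix.conjTranspose_apply, Matrix.diagonal_apply, Matrix.one_apply, dotProduct,
      Pi.star_apply, smul_eq_mul]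
  -- row k of Ykmat
  have hrowk : ∀ j, Ykmat V lam bn z k k j = if k = j then -z else 0 := by
    intro j
    rw [hKapply k j, hWk]
    by_cases h : k = j <;> simp [h, dotProduct]
  -- m k = 0
  have hmk : m k = 0 := by
    have h1 : (Ykmat V lam bn z k *ᵥ m) k = -z * m k := by
      simp [Matrix.mulVec, dotProduct, hrowk]
    rw [hrec, hωk] at h1
    exact (mul_eq_zero.mp h1.symm).resolve_left (neg_ne_zero.mpr hz0)
  -- omegak formula
  have hωapply : ∀ i, omegak V k i = c * (W i ⬝ᵥ star (V k)) := by
    intro i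
    rw [omegak, ← hcdef, ← hWdef]
    simp only [Pi.smul_apply, smul_eq_mul]
    rfl
  have hsingle : ∀ (M : Matrix (Fin q) (Fin q) ℂ) (i : Fin q),
      (M *ᵥ (Pi.single k 1 : Fin q → ℂ)) i = M i k := by
    intro M i
    show M i ⬝ᵥ (Pi.single k 1 : Fin q → ℂ) = M i k
    rw [dotProduct_single, mul_one]
  have hWkstar : star (W k) = (0 : Fin n → ℂ) := by rw [hWk]; simp
  -- column k of Ykmat
  have hcolk : Ykmat V lam bn z k *ᵥ (Pi.single k 1 : Fin q → ℂ)
      = (-z) • (Pi.single k 1 : Fin q → ℂ) := by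
    funext i
    rw [hsingle, hKapply i k]
    by_cases h : i = k
    · simp [h, hWkstar, Pi.single_apply]
    · simp [h, hWkstar, Pi.single_apply]
  -- D *ᵥ e_k
  have hDe : (Ymat V lam bn z - Ykmat V lam bn z k) *ᵥ (Pi.single k 1 : Fin q → ℂ)
      = omegak V k + tauk V lam bn k • (Pi.single k 1 : Fin q → ℂ) := by
    funext i
    rw [hsingle, Matrix.sub_apply, hYapply i k, hKapply i k]
    by_cases h : i = k
    · simp only [h, if_pos rfl, hWkstar, dotProduct_zero, Pi.add_apply, Pi.smul_apply,
        Pi.single_eq_same, smul_eq_mul, hωk, tauk, ← hcdef, if_true]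
      ring
    · simp only [if_neg h, Pi.add_apply, Pi.smul_apply, Pi.single_eq_of_ne h, smul_eq_mul,
        hωapply i, hWne i h, hWkstar, dotProduct_zero]
      ring
  -- D *ᵥ m
  have hDm : (Ymat V lam bn z - Ykmat V lam bn z k) *ᵥ m
      = quadk V lam bn z k • (Pi.single k 1 : Fin q → ℂ) := by
    funext i
    show ∑ j, (Ymat V lam bn z - Ykmat V lam bn z k) i j * m j
        = (quadk V lam bn z k • (Pi.single k 1 : Fin q → ℂ)) i
    by_cases h : i = k
    · rw [h, hquaddef]
      simp only [Pi.smul_apply, Pi.single_eq_same, smul_eq_mul, mul_one, dotProduct,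
        Pi.star_apply]
      apply Finset.sum_congr rfl
      intro j _
      by_cases hj : j = k
      · rw [hj, hmk]; ring
      · have hkj : ¬ (k = j) := fun hh => hj hh.symm
        rw [Matrix.sub_apply, hYapply k j, hKapply k j, hWk, hωapply j, hWne j hj,
          if_neg hkj, if_neg hkj]
        simp only [if_neg hkj, zero_dotProduct, mul_zero, sub_zero]
        have hst : star ((V j : Fin n → ℂ) ⬝ᵥ star (V k)) = V k ⬝ᵥ star (V j) := by
          rw [← star_dotProduct_star, star_star]
        rw [star_mul', hcstar, hst]
    · simp only [Pi.smul_apply, Pi.single_eq_of_ne h, smul_eq_mul, mul_zero]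
      apply Finset.sum_eq_zero
      intro j _
      by_cases hj : j = k
      · rw [hj, hmk, mul_zero]
      · rw [Matrix.sub_apply, hYapply i j, hKapply i j, hWne i h, hWne j hj]
        have hik : (if i = j then (if i = k then 0 else (lam i : ℂ)) else 0)
            = (if i = j then (lam i : ℂ) else 0) := by
          by_cases hij : i = j <;> simp [hij, h, hj]
        rw [hik]
        ring
  -- main identity
  have e1 : Ymat V lam bn z *ᵥ (Pi.single k 1 : Fin q → ℂ)
      = (omegak V k + tauk V lam bn k • (Pi.single k 1 : Fin q → ℂ))
        + (-z) • (Pi.single k 1 : Fin q → ℂ) := by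
    have h2 := Matrix.sub_mulVec (Ymat V lam bn z) (Ykmat V lam bn z k)
      (Pi.single k 1 : Fin q → ℂ)
    rw [hDe, hcolk] at h2
    exact eq_add_of_sub_eq h2.symm
  have e2 : Ymat V lam bn z *ᵥ m
      = quadk V lam bn z k • (Pi.single k 1 : Fin q → ℂ) + omegak V k := by
    have h2 := Matrix.sub_mulVec (Ymat V lam bn z) (Ykmat V lam bn z k) m
    rw [hDm, hrec] at h2
    exact eq_add_of_sub_eq h2.symm
  have hmain : Ymat V lam bn z *ᵥ ((Pi.single k 1 : Fin q → ℂ) - m)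
      = (-d) • (Pi.single k 1 : Fin q → ℂ) := by
    rw [Matrix.mulVec_sub, e1, e2, hd]
    funext i
    simp only [Pi.add_apply, Pi.sub_apply, Pi.smul_apply, smul_eq_mul]
    ring
  have hinv : (Pi.single k 1 : Fin q → ℂ) - m
      = (-d) • ((Ymat V lam bn z)⁻¹ *ᵥ (Pi.single k 1 : Fin q → ℂ)) := by
    have h3 := congrArg (fun v => (Ymat V lam bn z)⁻¹ *ᵥ v) hmain
    rw [mulVec_mulVec, Matrix.nonsing_inv_mul _ hdetY, one_mulVec, Matrix.mulVec_smul] at h3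
    exact h3
  have hk1 : (1 : ℂ) - m k = -d * ((Ymat V lam bn z)⁻¹ k k) := by
    have h4 := congrFun hinv k
    rw [Pi.sub_apply, Pi.single_eq_same, Pi.smul_apply, hsingle, smul_eq_mul] at h4
    exact h4
  rw [hmk, sub_zero] at hk1
  have h5 : -d * ((Ymat V lam bn z)⁻¹ k k) = -d * (-d⁻¹) := by
    rw [← hk1, neg_mul_neg, mul_inv_cancel₀ hd0]
  exact mul_left_cancel₀ (neg_ne_zero.mpr hd0) h5

end helperlemmas

/-- **Exact resolvent trace identities.** For `z ∈ ℂ⁺`, each denominator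
`z − τₖₖ + ωₖ* Y₍ₖ₎(z)⁻¹ ωₖ` has imaginary part at least `v = Im z > 0`, and
`p⁻¹ tr(Y(z)⁻¹) = −p⁻¹ Σₖ (z − τₖₖ + ωₖ*Y₍ₖ₎(z)⁻¹ωₖ)⁻¹` and
`p⁻¹ tr(Y(z)⁻¹ Λ) = −p⁻¹ Σₖ λₖ (z − τₖₖ + ωₖ*Y₍ₖ₎(z)⁻¹ωₖ)⁻¹`. -/
theorem resolvent_trace_identities {p n : ℕ} (hp : 0 < p)
    (z : ℂ) (hz : 0 < z.im)
    (lam : Fin p → ℝ) (hlam : ∀ k, 0 ≤ lam k)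
    (bn : ℝ) (hbn : 0 ≤ bn)
    (V : Matrix (Fin p) (Fin n) ℂ) :
    (∀ k : Fin p, z.im ≤ (z - tauk V lam bn k + quadk V lam bn z k).im) ∧
    (p : ℂ)⁻¹ * ((Ymat V lam bn z)⁻¹).trace
      = -((p : ℂ)⁻¹ * ∑ k : Fin p, (z - tauk V lam bn k + quadk V lam bn z k)⁻¹) ∧
    (p : ℂ)⁻¹ * ((Ymat V lam bn z)⁻¹ * Matrix.diagonal (fun i => (lam i : ℂ))).trace
      = -((p : ℂ)⁻¹ * ∑ k : Fin p,
          (lam k : ℂ) * (z - tauk V lam bn k + quadk V lam bn z k)⁻¹) := by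
  have hd := fun k => diag_entry hz lam bn V k
  refine ⟨fun k => (hd k).1, ?_, ?_⟩
  · have h1 : ((Ymat V lam bn z)⁻¹).trace
        = ∑ k, -(z - tauk V lam bn k + quadk V lam bn z k)⁻¹ := by
      rw [Matrix.trace]
      exact Finset.sum_congr rfl fun k _ => by rw [Matrix.diag_apply, (hd k).2]
    rw [h1, Finset.sum_neg_distrib, mul_neg]
  · have h1 : ((Ymat V lam bn z)⁻¹ * Matrix.diagonal (fun i => (lam i : ℂ))).trace
        = ∑ k, -((lam k : ℂ) * (z - tauk V lam bn k + quadk V lam bn z k)⁻¹) := by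
      rw [Matrix.trace]
      refine Finset.sum_congr rfl fun k _ => ?_
      rw [Matrix.diag_apply, Matrix.mul_diagonal, (hd k).2]
      ring
    rw [h1, Finset.sum_neg_distrib, mul_neg]
end

section
/- Let μ be a probability measure on [0,∞) with μ({0}) < 1, let b̄₂ > 0, and let z ∈ ℂ with Im z = v > 0. Suppose β and β′ both have nonnegative imaginary part and both satisfy the fixed-point equation β = −∫ a/(z + b̄₂ a β) dμ(a) (respectively with β′ in place of β). Then |∫ b̄₂ a²/((z + b̄₂ a β)(z + b̄₂ a β′)) dμ(a)| < 1. -/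
open MeasureTheory Filter
open scoped ENNReal BigOperators Classical

lemma im_ge (b2 : ℝ) (hb2 : 0 < b2) (z β : ℂ) (hβim : 0 ≤ β.im) {a : ℝ} (ha : 0 ≤ a) :
    z.im ≤ (z + (b2 : ℂ) * (a : ℂ) * β).im := by
  have : ((b2 : ℂ) * (a : ℂ) * β).im = b2 * a * β.im := by
    simp [Complex.mul_im]
  rw [Complex.add_im, this]
  nlinarith [mul_nonneg (mul_nonneg hb2.le ha) hβim]

lemma D_ne (b2 : ℝ) (hb2 : 0 < b2) (z : ℂ) (hz : 0 < z.im) (β : ℂ) (hβim : 0 ≤ β.im)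
    {a : ℝ} (ha : 0 ≤ a) : z + (b2 : ℂ) * (a : ℂ) * β ≠ 0 := by
  intro h
  have him := im_ge b2 hb2 z β hβim ha
  rw [h] at him
  simp only [Complex.zero_im] at him
  linarith

lemma ae_nonneg (μ : Measure ℝ) (hsupp : μ (Set.Iio 0) = 0) : ∀ᵐ a ∂μ, (0:ℝ) ≤ a := by
  rw [ae_iff]
  convert hsupp using 2
  ext x; simp [Set.mem_Iio, not_le]

lemma measure_Ioi_pos (μ : Measure ℝ) [IsProbabilityMeasure μ]
    (hsupp : μ (Set.Iio 0) = 0) (h0 : μ {0} < 1) : 0 < μ (Set.Ioi 0) := by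
  by_contra h
  push_neg at h
  have h' : μ (Set.Ioi 0) = 0 := le_antisymm h zero_le
  have hu : (Set.Iio (0:ℝ)) ∪ {0} ∪ Set.Ioi 0 = Set.univ := by
    ext x
    simp only [Set.mem_union, Set.mem_Iio, Set.mem_singleton_iff, Set.mem_Ioi, Set.mem_univ,
      iff_true]
    rcases lt_trichotomy x 0 with h|h|h
    · exact Or.inl (Or.inl h)
    · exact Or.inl (Or.inr h)
    · exact Or.inr h
  have := measure_univ (μ := μ)
  rw [← hu] at this
  have hle : μ ((Set.Iio (0:ℝ)) ∪ {0} ∪ Set.Ioi 0) ≤ μ (Set.Iio 0) + μ {0} + μ (Set.Ioi 0) :=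
    le_trans (measure_union_le _ _) (add_le_add_left (measure_union_le _ _) _)
  rw [this, hsupp, h', zero_add, add_zero] at hle
  exact absurd (lt_of_le_of_lt hle h0) (lt_irrefl _)

lemma aux (μ : Measure ℝ) [IsProbabilityMeasure μ]
    (hsupp : μ (Set.Iio 0) = 0) (h0 : μ {0} < 1)
    (b2 : ℝ) (hb2 : 0 < b2) (z : ℂ) (hz : 0 < z.im)
    (β : ℂ) (hβim : 0 ≤ β.im)
    (hfix : β = - ∫ a, (a : ℂ) / (z + (b2 : ℂ) * (a : ℂ) * β) ∂μ)
    (hf : Integrable (fun a : ℝ => (a : ℂ) / (z + (b2 : ℂ) * (a : ℂ) * β)) μ)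
    (hIoi : 0 < μ (Set.Ioi 0)) :
    Integrable (fun a : ℝ => b2 * a ^ 2 / Complex.normSq (z + (b2 : ℂ) * (a : ℂ) * β)) μ ∧
      ∫ a, b2 * a ^ 2 / Complex.normSq (z + (b2 : ℂ) * (a : ℂ) * β) ∂μ < 1 := by
  have hae : ∀ᵐ a ∂μ, (0:ℝ) ≤ a := ae_nonneg μ hsupp
  set D : ℝ → ℂ := fun a => z + (b2 : ℂ) * (a : ℂ) * β with hD
  set T : ℝ → ℝ := fun a => -(((a : ℂ) / D a).im) with hTdef
  have hT_int : Integrable T μ := hf.im.neg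
  -- the identity β.im = ∫ T
  have hbim : β.im = ∫ a, T a ∂μ := by
    have h1 := ContinuousLinearMap.integral_comp_comm Complex.imCLM hf
    simp only [Complex.imCLM_apply] at h1
    rw [hfix, Complex.neg_im, ← h1, ← integral_neg]
  -- pointwise formula
  have hDim : ∀ a : ℝ, (D a).im = z.im + b2 * a * β.im := by
    intro a
    simp [hD, Complex.add_im, Complex.mul_im]
  have hT_eq : ∀ a : ℝ, T a = z.im * (a / Complex.normSq (D a))
      + β.im * (b2 * a ^ 2 / Complex.normSq (D a)) := by
    intro a
    rw [hTdef]
    simp only [Complex.div_im, Complex.ofReal_im, Complex.ofReal_re]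
    rw [hDim a]
    ring
  set g1 : ℝ → ℝ := fun a => a / Complex.normSq (D a) with hg1def
  set g2 : ℝ → ℝ := fun a => b2 * a ^ 2 / Complex.normSq (D a) with hg2def
  have hg2nn : ∀ a, 0 ≤ g2 a := fun a => by
    apply div_nonneg _ (Complex.normSq_nonneg _); positivity
  have hg1nn : ∀ᵐ a ∂μ, 0 ≤ g1 a := by
    filter_upwards [hae] with a ha
    exact div_nonneg ha (Complex.normSq_nonneg _)
  have hDmeas : Measurable (fun a : ℝ => Complex.normSq (D a)) := by
    exact Complex.continuous_normSq.measurable.comp (by fun_prop)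
  have hg1meas : AEStronglyMeasurable g1 μ :=
    (measurable_id.div hDmeas).aestronglyMeasurable
  have hg2meas : AEStronglyMeasurable g2 μ := by
    apply Measurable.aestronglyMeasurable
    exact ((measurable_const.mul (measurable_id.pow_const 2)).div hDmeas)
  have hg1int : Integrable g1 μ := by
    have h1 : Integrable (fun a => z.im * g1 a) μ := by
      apply hT_int.mono' (hg1meas.const_mul _)
      filter_upwards [hae, hg1nn] with a ha hg1
      rw [Real.norm_eq_abs, abs_of_nonneg (by positivity)]
      rw [hT_eq a]
      nlinarith [mul_nonneg hβim (hg2nn a)]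
    have := h1.const_mul (z.im)⁻¹
    refine this.congr (Eventually.of_forall fun a => ?_)
    field_simp
  have hI1pos : 0 < ∫ a, g1 a ∂μ := by
    rw [integral_pos_iff_support_of_nonneg_ae hg1nn hg1int]
    refine lt_of_lt_of_le hIoi (measure_mono ?_)
    intro a (ha : 0 < a)
    have him : 0 < (D a).im := lt_of_lt_of_le hz (im_ge b2 hb2 z β hβim ha.le)
    have hD0 : D a ≠ 0 := fun h => by simp [h] at him
    have : 0 < g1 a := div_pos ha (Complex.normSq_pos.mpr hD0)
    exact ne_of_gt this
  have hβpos : 0 < β.im := by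
    rcases lt_or_eq_of_le hβim with h | h
    · exact h
    have h3 : ∫ a, T a ∂μ = z.im * ∫ a, g1 a ∂μ := by
      rw [← integral_const_mul _]
      apply integral_congr_ae (Eventually.of_forall fun a => ?_)
      show T a = z.im * g1 a
      rw [hT_eq a, ← h]; ring
    nlinarith [mul_pos hz hI1pos, hbim]
  have hg2int : Integrable g2 μ := by
    have h2 : Integrable (fun a => β.im * g2 a) μ := by
      have : (fun a => β.im * g2 a) = fun a => T a - z.im * g1 a := by
        funext a; rw [hT_eq a]; ring
      rw [this]
      exact hT_int.sub (hg1int.const_mul _)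
    have := h2.const_mul (β.im)⁻¹
    refine this.congr (Eventually.of_forall fun a => ?_)
    field_simp
  refine ⟨hg2int, ?_⟩
  have hident : ∫ a, T a ∂μ = z.im * (∫ a, g1 a ∂μ) + β.im * ∫ a, g2 a ∂μ := by
    rw [← integral_const_mul _, ← integral_const_mul _,
      ← integral_add (hg1int.const_mul _) (hg2int.const_mul _)]
    apply integral_congr_ae (Eventually.of_forall fun a => ?_)
    show T a = z.im * g1 a + β.im * g2 a
    exact hT_eq a
  nlinarith [mul_pos hz hI1pos, hβpos, hbim]

lemma not_int (μ : Measure ℝ) [IsProbabilityMeasure μ]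
    (hsupp : μ (Set.Iio 0) = 0)
    (b2 : ℝ) (hb2 : 0 < b2) (z : ℂ) (hz : 0 < z.im)
    (γ : ℂ) (hγim : 0 ≤ γ.im) (ha : ¬ Integrable (fun a : ℝ => a) μ) :
    ¬ Integrable (fun a : ℝ => ((b2 : ℂ) * (a : ℂ) ^ 2) / (z * (z + (b2 : ℂ) * (a : ℂ) * γ))) μ := by
  intro hg
  have hae : ∀ᵐ a ∂μ, (0:ℝ) ≤ a := ae_nonneg μ hsupp
  have hz0 : z ≠ 0 := fun h => by rw [h] at hz; simp at hz
  have hZ : 0 < ‖z‖ := norm_pos_iff.mpr hz0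
  set c : ℝ := ‖z‖ * (‖z‖ + b2 * ‖γ‖) with hc
  have hcpos : 0 < c := by positivity
  apply ha
  apply Integrable.mono' (g := fun a : ℝ =>
      1 + (c / b2) * ‖((b2 : ℂ) * (a : ℂ) ^ 2) / (z * (z + (b2 : ℂ) * (a : ℂ) * γ))‖)
    ((integrable_const 1).add (hg.norm.const_mul _)) measurable_id.aestronglyMeasurable
  filter_upwards [hae] with a ha0
  rw [Real.norm_eq_abs, id_eq, abs_of_nonneg ha0]
  rcases le_or_gt a 1 with h1 | h1
  · have : 0 ≤ (c / b2) * ‖((b2 : ℂ) * (a : ℂ) ^ 2) / (z * (z + (b2 : ℂ) * (a : ℂ) * γ))‖ := by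
      positivity
    linarith
  · set A : ℝ := ‖z + (b2 : ℂ) * (a : ℂ) * γ‖ with hA
    have hApos : 0 < A := norm_pos_iff.mpr (D_ne b2 hb2 z hz γ hγim ha0)
    have hnorm : ‖((b2 : ℂ) * (a : ℂ) ^ 2) / (z * (z + (b2 : ℂ) * (a : ℂ) * γ))‖
        = b2 * a ^ 2 / (‖z‖ * A) := by
      rw [norm_div, norm_mul, norm_mul, norm_pow, Complex.norm_real,
        Complex.norm_real, Real.norm_eq_abs, Real.norm_eq_abs, abs_of_nonneg hb2.le, abs_of_nonneg ha0, ← hA]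
    rw [hnorm]
    have hAle : A ≤ a * (‖z‖ + b2 * ‖γ‖) := by
      rw [hA]
      refine le_trans (norm_add_le _ _) ?_
      have : ‖(b2 : ℂ) * (a : ℂ) * γ‖ = b2 * a * ‖γ‖ := by
        rw [norm_mul, norm_mul, Complex.norm_real, Complex.norm_real, Real.norm_eq_abs, Real.norm_eq_abs,
          abs_of_nonneg hb2.le, abs_of_nonneg ha0]
      rw [this]
      nlinarith [norm_nonneg γ]
    have key : a ≤ (c / b2) * (b2 * a ^ 2 / (‖z‖ * A)) := by
      have hrw : (c / b2) * (b2 * a ^ 2 / (‖z‖ * A))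
          = c * a ^ 2 / (‖z‖ * A) := by
        field_simp
      rw [hrw, le_div_iff₀ (by positivity)]
      nlinarith [mul_le_mul_of_nonneg_left hAle (mul_nonneg ha0 hZ.le), hc, hZ, hApos,
        norm_nonneg γ, ha0]
    linarith

/-- **Contraction bound.** If `β` and `β′` both have nonnegative imaginary part and both solve
the fixed-point equation `β = −∫ a/(z + b̄₂ a β) dμ(a)` for a probability measure `μ` on `[0,∞)`
with `μ({0}) < 1`, `b̄₂ > 0` and `Im z > 0`, then
`|∫ b̄₂ a²/((z + b̄₂ a β)(z + b̄₂ a β′)) dμ(a)| < 1`. -/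
theorem fixed_point_contraction_bound
    (μ : Measure ℝ) [IsProbabilityMeasure μ]
    (hsupp : μ (Set.Iio 0) = 0) (h0 : μ {0} < 1)
    (b2 : ℝ) (hb2 : 0 < b2)
    (z : ℂ) (hz : 0 < z.im)
    (β β' : ℂ) (hβim : 0 ≤ β.im) (hβ'im : 0 ≤ β'.im)
    (hfix : β = - ∫ a, (a : ℂ) / (z + (b2 : ℂ) * (a : ℂ) * β) ∂μ)
    (hfix' : β' = - ∫ a, (a : ℂ) / (z + (b2 : ℂ) * (a : ℂ) * β') ∂μ) :
    ‖(∫ a, ((b2 : ℂ) * (a : ℂ) ^ 2) /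
        ((z + (b2 : ℂ) * (a : ℂ) * β) * (z + (b2 : ℂ) * (a : ℂ) * β')) ∂μ)‖ < 1 := by
  have hae : ∀ᵐ a ∂μ, (0:ℝ) ≤ a := ae_nonneg μ hsupp
  by_cases hf : Integrable (fun a : ℝ => (a : ℂ) / (z + (b2 : ℂ) * (a : ℂ) * β)) μ
  · by_cases hf' : Integrable (fun a : ℝ => (a : ℂ) / (z + (b2 : ℂ) * (a : ℂ) * β')) μ
    · -- main case
      have hIoi := measure_Ioi_pos μ hsupp h0
      obtain ⟨hg2int, hI2⟩ := aux μ hsupp h0 b2 hb2 z hz β hβim hfix hf hIoi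
      obtain ⟨hg2int', hI2'⟩ := aux μ hsupp h0 b2 hb2 z hz β' hβ'im hfix' hf' hIoi
      have key : ∀ x y cc : ℝ, 0 < x → 0 < y → 0 ≤ cc →
          cc / (x * y) ≤ (cc / x ^ 2 + cc / y ^ 2) / 2 := by
        intro x y cc hx hy hcc
        rw [div_add_div _ _ (by positivity) (by positivity), div_div,
          div_le_div_iff₀ (by positivity) (by positivity)]
        nlinarith [mul_nonneg (mul_nonneg hcc (mul_pos hx hy).le) (sq_nonneg (x - y))]
      have h1 : ‖(∫ a, ((b2 : ℂ) * (a : ℂ) ^ 2) /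
            ((z + (b2 : ℂ) * (a : ℂ) * β) * (z + (b2 : ℂ) * (a : ℂ) * β')) ∂μ)‖
          ≤ ∫ a, ‖((b2 : ℂ) * (a : ℂ) ^ 2) /
            ((z + (b2 : ℂ) * (a : ℂ) * β) * (z + (b2 : ℂ) * (a : ℂ) * β'))‖ ∂μ := by
        exact norm_integral_le_integral_norm _
      have h2 : ∫ a, ‖((b2 : ℂ) * (a : ℂ) ^ 2) /
            ((z + (b2 : ℂ) * (a : ℂ) * β) * (z + (b2 : ℂ) * (a : ℂ) * β'))‖ ∂μ
          ≤ ∫ a, (b2 * a ^ 2 / Complex.normSq (z + (b2 : ℂ) * (a : ℂ) * β)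
              + b2 * a ^ 2 / Complex.normSq (z + (b2 : ℂ) * (a : ℂ) * β')) / 2 ∂μ := by
        apply integral_mono_of_nonneg (Eventually.of_forall fun a => norm_nonneg _)
          ((hg2int.add hg2int').div_const 2)
        filter_upwards [hae] with a ha0
        simp only [Pi.add_apply]
        have hx : 0 < ‖z + (b2 : ℂ) * (a : ℂ) * β‖ :=
          norm_pos_iff.mpr (D_ne b2 hb2 z hz β hβim ha0)
        have hy : 0 < ‖z + (b2 : ℂ) * (a : ℂ) * β'‖ :=
          norm_pos_iff.mpr (D_ne b2 hb2 z hz β' hβ'im ha0)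
        rw [norm_div, norm_mul, norm_mul, norm_pow, Complex.norm_real,
          Complex.norm_real, Real.norm_eq_abs, Real.norm_eq_abs, abs_of_nonneg hb2.le, abs_of_nonneg ha0,
          Complex.normSq_eq_norm_sq, Complex.normSq_eq_norm_sq]
        exact key _ _ _ hx hy (by positivity)
      have h3 : ∫ a, (b2 * a ^ 2 / Complex.normSq (z + (b2 : ℂ) * (a : ℂ) * β)
              + b2 * a ^ 2 / Complex.normSq (z + (b2 : ℂ) * (a : ℂ) * β')) / 2 ∂μ
          = ((∫ a, b2 * a ^ 2 / Complex.normSq (z + (b2 : ℂ) * (a : ℂ) * β) ∂μ)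
              + ∫ a, b2 * a ^ 2 / Complex.normSq (z + (b2 : ℂ) * (a : ℂ) * β') ∂μ) / 2 := by
        rw [integral_div, integral_add hg2int hg2int']
      linarith
    · -- β' degenerate
      have hβ'0 : β' = 0 := by
        rw [integral_undef hf'] at hfix'
        simpa using hfix'
      subst hβ'0
      have har : ¬ Integrable (fun a : ℝ => a) μ := by
        intro h
        apply hf'
        have h2 : Integrable (fun a : ℝ => ((a : ℝ) : ℂ)) μ := h.ofReal
        refine (h2.div_const z).congr (Eventually.of_forall fun a => ?_)
        simp
      simp only [mul_zero, add_zero]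
      rw [integral_undef]
      · simp
      · intro h
        exact not_int μ hsupp b2 hb2 z hz β hβim har
          (h.congr (Eventually.of_forall fun a => by ring))
  · -- β degenerate
    have hβ0 : β = 0 := by
      rw [integral_undef hf] at hfix
      simpa using hfix
    subst hβ0
    have har : ¬ Integrable (fun a : ℝ => a) μ := by
      intro h
      apply hf
      have h2 : Integrable (fun a : ℝ => ((a : ℝ) : ℂ)) μ := h.ofReal
      refine (h2.div_const z).congr (Eventually.of_forall fun a => ?_)
      simp
    simp only [mul_zero, add_zero]
    rw [integral_undef (not_int μ hsupp b2 hb2 z hz β' hβ'im har)]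
    simp
end
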